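/- Let K be a semiring and (Σ,M) an OP alphabet. Let φ be a formula of MSO(K,(Σ,M)) such that ⟦φ⟧ is regular (respectively strictly regular). Then ⟦⊕_x φ⟧ and ⟦⊕_X φ⟧ are regular (respectively strictly regular). -/

import Mathlib

namespace WOP

/-- Precedence relations: yields precedence, equal in precedence, takes precedence. -/
inductive PrecRel where
  | lt | eq | gt
deriving DecidableEq

/-- An operator precedence matrix on `Σ ∪ {#}`, where `none` encodes `#`.
It assigns at most one precedence relation to each ordered pair, with
`# ⋖ a` and `a ⋗ #` for every letter `a`. -/
structure OPM (A : Type) where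
  rel : Option A → Option A → Option PrecRel
  hash_lt : ∀ a : A, rel none (some a) = some .lt
  hash_gt : ∀ a : A, rel (some a) none = some .gt

variable {A B K : Type}

/-- The letter of `#w#` at position `i` (positions `0` and `> |w|` carry `#`, i.e. `none`). -/
def letterAt (w : List A) (i : ℕ) : Option A :=
  if i = 0 then none else w[i - 1]?

section ChainRel

variable (M : OPM A) (L : ℕ → Option A)

mutual
  /-- `ChainMid M L k j`: there are `k = k_s < ... < k_m = j` with
  `L k_s ≐ L k_{s+1} ≐ ... ≐ L k_{m-1} ⋗ L k_m` and the gap condition between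
  consecutive elements. -/
  inductive ChainMid : ℕ → ℕ → Prop where
    | last {k j : ℕ} : M.rel (L k) (L j) = some .gt → ChainGap k j → ChainMid k j
    | step {k k' j : ℕ} : M.rel (L k) (L k') = some .eq → ChainGap k k' →
        ChainMid k' j → ChainMid k j

  /-- The gap condition between consecutive elements of a chain:
  adjacent positions or a chain. -/
  inductive ChainGap : ℕ → ℕ → Prop where
    | adj (k : ℕ) : ChainGap k (k + 1)
    | chain {k k' : ℕ} : Chain k k' → ChainGap k k'

  /-- The chain relation `i ⤳ j`: there are positions `i = k_1 < ... < k_m = j` with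
  `L k_1 ⋖ L k_2 ≐ ... ≐ L k_{m-1} ⋗ L k_m` such that consecutive `k`'s are adjacent
  or themselves related by `⤳`. -/
  inductive Chain : ℕ → ℕ → Prop where
    | mk {i k j : ℕ} : M.rel (L i) (L k) = some .lt → ChainGap i k → ChainMid k j →
        Chain i j
end

end ChainRel

/-- `(Σ,M)^+`: the set of nonempty words compatible with `M`, i.e. `0 ⤳ |w|+1` in `#w#`. -/
def OPWords (M : OPM A) : Set (List A) :=
  {w | w ≠ [] ∧ Chain M (letterAt w) 0 (w.length + 1)}

/-- An (unweighted) operator precedence automaton over the alphabet `A`. -/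
structure OPA (A : Type) where
  Q : Type
  fin : Fintype Q
  I : Set Q
  F : Set Q
  δpush : Set (Q × A × Q)
  δshift : Set (Q × A × Q)
  δpop : Set (Q × Q × Q)

/-- A weighted operator precedence automaton over the alphabet `A` and weights in `K`. -/
structure WOPA (A K : Type) extends OPA A where
  wtpush : Q × A × Q → K
  wtshift : Q × A × Q → K
  wtpop : Q × Q × Q → K

/-- A configuration: a stack of (symbol, state) pairs, a current state,
and the remaining input. -/
structure Config (A Q : Type) where
  stack : List (A × Q)
  state : Q
  input : List A

/-- The moves (transitions) an OPA may take. -/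
inductive Move (A Q : Type) where
  | push (q : Q) (b : A) (r : Q)
  | shift (q : Q) (b : A) (r : Q)
  | pop (q p r : Q)

/-- The topmost stack symbol (`none` = `#` for the empty stack). -/
def topSym {Q : Type} (st : List (A × Q)) : Option A := st.head?.map Prod.fst

/-- One step of an OPA on an OP alphabet `(A, M)`. -/
inductive Exec (M : OPM A) (T : OPA A) : Config A T.Q → Move A T.Q → Config A T.Q → Prop where
  | push {st : List (A × T.Q)} {q r : T.Q} {b : A} {x : List A} :
      M.rel (topSym st) (some b) = some .lt → (q, b, r) ∈ T.δpush →
      Exec M T ⟨st, q, b :: x⟩ (.push q b r) ⟨(b, q) :: st, r, x⟩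
  | shift {st : List (A × T.Q)} {p q r : T.Q} {a b : A} {x : List A} :
      M.rel (some a) (some b) = some .eq → (q, b, r) ∈ T.δshift →
      Exec M T ⟨(a, p) :: st, q, b :: x⟩ (.shift q b r) ⟨(b, p) :: st, r, x⟩
  | pop {st : List (A × T.Q)} {p q r : T.Q} {a : A} {x : List A} :
      M.rel (some a) x.head? = some .gt → (q, p, r) ∈ T.δpop →
      Exec M T ⟨(a, p) :: st, q, x⟩ (.pop q p r) ⟨st, r, x⟩

/-- Execution of a sequence of moves. -/
inductive ExecList (M : OPM A) (T : OPA A) :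
    Config A T.Q → List (Move A T.Q) → Config A T.Q → Prop where
  | nil (c : Config A T.Q) : ExecList M T c [] c
  | cons {c c' c'' : Config A T.Q} {m : Move A T.Q} {ms : List (Move A T.Q)} :
      Exec M T c m c' → ExecList M T c' ms c'' → ExecList M T c (m :: ms) c''

/-- The weight of a move of a weighted OPA. -/
def moveWt [Semiring K] (W : WOPA A K) : Move A W.Q → K
  | .push q b r => W.wtpush (q, b, r)
  | .shift q b r => W.wtshift (q, b, r)
  | .pop q p r => W.wtpop (q, p, r)

/-- The accepting runs of an OPA on `w`: an initial state, a sequence of moves from the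
initial configuration (empty stack, whole input) to a final configuration
(empty stack, input read), and the final state reached. -/
def AccRuns (M : OPM A) (T : OPA A) (w : List A) : Set (T.Q × List (Move A T.Q) × T.Q) :=
  {ρ | ρ.1 ∈ T.I ∧ ρ.2.2 ∈ T.F ∧ ExecList M T ⟨[], ρ.1, w⟩ ρ.2.1 ⟨[], ρ.2.2, []⟩}

/-- The behavior `⟦W⟧(w)`: the sum over all accepting runs of `W` on `w` of the product
(in order) of the weights of the moves of the run. -/
noncomputable def behavior [Semiring K] (M : OPM A) (W : WOPA A K) (w : List A) : K :=
  ∑ᶠ ρ ∈ AccRuns M W.toOPA w, (ρ.2.1.map (moveWt W)).prod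

/-- A weighted OPA is restricted (an rwOPA) if all pop weights are `1`. -/
def Restricted [Semiring K] (W : WOPA A K) : Prop := ∀ t ∈ W.δpop, W.wtpop t = 1

/-- A series `S : (Σ,M)^+ → K` is regular if it is the behavior of some wOPA. -/
def Regular [Semiring K] (M : OPM A) (S : List A → K) : Prop :=
  ∃ W : WOPA A K, ∀ w ∈ OPWords M, S w = behavior M W w

/-- A series is strictly regular if it is the behavior of some restricted wOPA. -/
def StrictlyRegular [Semiring K] (M : OPM A) (S : List A → K) : Prop :=
  ∃ W : WOPA A K, Restricted W ∧ ∀ w ∈ OPWords M, S w = behavior M W w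

/-- Unweighted acceptance. -/
def Accepts (M : OPM A) (T : OPA A) (w : List A) : Prop :=
  ∃ qI ms qF, qI ∈ T.I ∧ qF ∈ T.F ∧ ExecList M T ⟨[], qI, w⟩ ms ⟨[], qF, []⟩

/-- A language `L ⊆ (Σ,M)^+` is an operator precedence language if it is the set of
compatible words accepted by some OPA. -/
def IsOPL (M : OPM A) (L : Set (List A)) : Prop :=
  ∃ T : OPA A, L = {w | w ∈ OPWords M ∧ Accepts M T w}

/-- The intersection `S ∩ L` of a series with a language. -/
noncomputable def interSeries [Semiring K] (S : List A → K) (L : Set (List A))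
    (w : List A) : K :=
  open Classical in if w ∈ L then S w else 0

/-- `h : Σ → Γ` is OPM-preserving: `a ⊙ b` iff `h(a) ⊙ h(b)` for every relation `⊙`. -/
def OPMPreserving (M : OPM A) (M' : OPM B) (h : A → B) : Prop :=
  ∀ a b : A, M.rel (some a) (some b) = M'.rel (some (h a)) (some (h b))

/-- The image series `h(S)(v) = ∑_{w ∈ (Σ,M)^+, h(w) = v} S(w)`. -/
noncomputable def mapSeries [Semiring K] (M : OPM A) (h : A → B) (S : List A → K)
    (v : List B) : K :=
  ∑ᶠ w ∈ {w | w ∈ OPWords M ∧ w.map h = v}, S w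

/-- The pullback OPM `h⁻¹(M)` along `h : Σ' → Σ`. -/
def pullOPM (M : OPM A) (h : B → A) : OPM B where
  rel o₁ o₂ := M.rel (o₁.map h) (o₂.map h)
  hash_lt b := M.hash_lt (h b)
  hash_gt b := M.hash_gt (h b)

/-- The Nivat class `N(Σ,M,K)`: series obtained from a one-state restricted wOPA over a
pulled-back OP alphabet, intersected with an OPL, followed by the projection. -/
def NivatClass [Semiring K] (M : OPM A) (S : List A → K) : Prop :=
  ∃ (B : Type) (_ : Fintype B) (h : B → A) (W : WOPA B K) (L : Set (List B)),
    Restricted W ∧ (∃ q₀ : W.Q, ∀ q : W.Q, q = q₀) ∧ IsOPL (pullOPM M h) L ∧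
    ∀ v ∈ OPWords M,
      S v = mapSeries (pullOPM M h) h (interSeries (behavior (pullOPM M h) W) L) v

/-- An OPL step function: a finite sum `∑ kᵢ · 1_{Lᵢ}` with the `Lᵢ` OPLs forming a
partition of `(Σ,M)^+`. -/
def IsOPLStep [Semiring K] (M : OPM A) (S : List A → K) : Prop :=
  ∃ (n : ℕ) (k : Fin n → K) (L : Fin n → Set (List A)),
    (∀ i, IsOPL M (L i)) ∧ (∀ i j, i ≠ j → Disjoint (L i) (L j)) ∧
    (⋃ i, L i) = OPWords M ∧ ∀ i, ∀ w ∈ L i, S w = k i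



/-!  ### Weighted MSO logic for OPLs -/

/-- Variables: `Sum.inl x` is a first-order variable, `Sum.inr X` a second-order one. -/
abbrev Var : Type := ℕ ⊕ ℕ

/-- Boolean MSO formulas over the OP alphabet `(Σ, M)`; labels range over `Σ ∪ {#}`
(`none` encodes `#`). -/
inductive BFormula (A : Type) where
  | lab (a : Option A) (x : ℕ)
  | le (x y : ℕ)
  | chainR (x y : ℕ)
  | mem (x X : ℕ)
  | not (β : BFormula A)
  | or (β₁ β₂ : BFormula A)
  | exFO (x : ℕ) (β : BFormula A)
  | exSO (X : ℕ) (β : BFormula A)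

/-- Weighted MSO formulas over `(Σ, M)` and the semiring `K`. -/
inductive WFormula (A K : Type) where
  | atom (β : BFormula A)
  | const (k : K)
  | plus (φ ψ : WFormula A K)
  | times (φ ψ : WFormula A K)
  | sumFO (x : ℕ) (φ : WFormula A K)
  | sumSO (X : ℕ) (φ : WFormula A K)
  | prodFO (x : ℕ) (φ : WFormula A K)

/-- Free variables of a boolean formula. -/
def BFormula.free {A : Type} : BFormula A → Finset Var
  | .lab _ x => {Sum.inl x}
  | .le x y => {Sum.inl x, Sum.inl y}
  | .chainR x y => {Sum.inl x, Sum.inl y}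
  | .mem x X => {Sum.inl x, Sum.inr X}
  | .not β => β.free
  | .or β₁ β₂ => β₁.free ∪ β₂.free
  | .exFO x β => β.free \ {Sum.inl x}
  | .exSO X β => β.free \ {Sum.inr X}

/-- Free variables of a weighted formula. -/
def WFormula.free {A K : Type} : WFormula A K → Finset Var
  | .atom β => β.free
  | .const _ => ∅
  | .plus φ ψ => φ.free ∪ ψ.free
  | .times φ ψ => φ.free ∪ ψ.free
  | .sumFO x φ => φ.free \ {Sum.inl x}
  | .sumSO X φ => φ.free \ {Sum.inr X}
  | .prodFO x φ => φ.free \ {Sum.inl x}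

/-- Satisfaction of a boolean formula on `w` under a first-order assignment `σ`
(into positions `1, ..., |w|`) and a second-order assignment `τ`. -/
def BSat (M : OPM A) (w : List A) : (ℕ → ℕ) → (ℕ → Set ℕ) → BFormula A → Prop
  | σ, _, .lab a x => letterAt w (σ x) = a
  | σ, _, .le x y => σ x ≤ σ y
  | σ, _, .chainR x y => Chain M (letterAt w) (σ x) (σ y)
  | σ, τ, .mem x X => σ x ∈ τ X
  | σ, τ, .not β => ¬ BSat M w σ τ β
  | σ, τ, .or β₁ β₂ => BSat M w σ τ β₁ ∨ BSat M w σ τ β₂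
  | σ, τ, .exFO x β => ∃ i ∈ Finset.Icc 1 w.length, BSat M w (Function.update σ x i) τ β
  | σ, τ, .exSO X β => ∃ I ⊆ Set.Icc 1 w.length, BSat M w σ (Function.update τ X I) β

/-- The (assignment-based) semantics of a weighted formula: sums range over the
positions `1, ..., |w|` (resp. their subsets) and the product quantifier multiplies
in increasing order of positions. -/
noncomputable def sem [Semiring K] (M : OPM A) (w : List A) :
    (ℕ → ℕ) → (ℕ → Set ℕ) → WFormula A K → K
  | σ, τ, .atom β => open Classical in if BSat M w σ τ β then 1 else 0
  | _, _, .const k => k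
  | σ, τ, .plus φ ψ => sem M w σ τ φ + sem M w σ τ ψ
  | σ, τ, .times φ ψ => sem M w σ τ φ * sem M w σ τ ψ
  | σ, τ, .sumFO x φ => ∑ i ∈ Finset.Icc 1 w.length, sem M w (Function.update σ x i) τ φ
  | σ, τ, .sumSO X φ => ∑ I ∈ (Finset.Icc 1 w.length).powerset,
      sem M w σ (Function.update τ X (↑I : Set ℕ)) φ
  | σ, τ, .prodFO x φ =>
      ((List.range w.length).map fun i => sem M w (Function.update σ x (i + 1)) τ φ).prod

/-- The extended alphabet `Σ_V = Σ × {0,1}^V`. -/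
abbrev AV (A : Type) (V : Finset Var) : Type := A × ({v // v ∈ V} → Bool)

/-- The OPM `M_V` on `Σ_V`, relating extended letters exactly as `M` relates their
first components. -/
def extOPM (M : OPM A) (V : Finset Var) : OPM (AV A V) where
  rel o₁ o₂ := M.rel (o₁.map Prod.fst) (o₂.map Prod.fst)
  hash_lt p := M.hash_lt p.1
  hash_gt p := M.hash_gt p.1

/-- The bit of the first-order variable `x` is set at position `i` of `u`. -/
def bitFO (V : Finset Var) (u : List (AV A V)) (x : ℕ) (i : ℕ) : Prop :=
  ∃ h : Sum.inl x ∈ V, ∃ p ∈ u[i - 1]?, 1 ≤ i ∧ p.2 ⟨Sum.inl x, h⟩ = true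

/-- The bit of the second-order variable `X` is set at position `i` of `u`. -/
def bitSO (V : Finset Var) (u : List (AV A V)) (X : ℕ) (i : ℕ) : Prop :=
  ∃ h : Sum.inr X ∈ V, ∃ p ∈ u[i - 1]?, 1 ≤ i ∧ p.2 ⟨Sum.inr X, h⟩ = true

/-- A word over `Σ_V` is valid if every first-order variable of `V` is assigned to
exactly one position. -/
def validEnc (V : Finset Var) (u : List (AV A V)) : Prop :=
  ∀ x : ℕ, Sum.inl x ∈ V → ∃! i, bitFO V u x i

/-- The first-order assignment encoded in a word over `Σ_V`. -/
noncomputable def decFO (V : Finset Var) (u : List (AV A V)) : ℕ → ℕ :=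
  fun x => sInf {i | bitFO V u x i}

/-- The second-order assignment encoded in a word over `Σ_V`. -/
def decSO (V : Finset Var) (u : List (AV A V)) : ℕ → Set ℕ :=
  fun X => {i | bitSO V u X i}

/-- The semantics `⟦φ⟧_V : (Σ_V, M_V)^+ → K`: `0` on non-valid words, and otherwise the
value of `φ` on the decoded word and assignments. -/
noncomputable def semV [Semiring K] (M : OPM A) (φ : WFormula A K) (V : Finset Var)
    (u : List (AV A V)) : K :=
  open Classical in
  if validEnc V u then sem M (u.map Prod.fst) (decFO V u) (decSO V u) φ else 0

/-- Restriction `(w, σ) ↦ (w, σ↾W)` of encoded words from `V`-encodings to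
`W`-encodings, for `W ⊆ V`. -/
def restrictWord {V W : Finset Var} (h : W ⊆ V) (u : List (AV A V)) : List (AV A W) :=
  u.map fun p => (p.1, fun v => p.2 ⟨v.1, h v.2⟩)

/-- Semantics of a sentence, as a series over `(Σ, M)^+`. -/
noncomputable def semClosed [Semiring K] (M : OPM A) (φ : WFormula A K)
    (w : List A) : K :=
  sem M w (fun _ => 1) (fun _ => ∅) φ

/-- Almost boolean formulas: built from constants and boolean formulas by `⊕` and `⊗`. -/
inductive AlmostBoolean {A K : Type} : WFormula A K → Prop where
  | atom (β : BFormula A) : AlmostBoolean (.atom β)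
  | const (k : K) : AlmostBoolean (.const k)
  | plus {φ ψ : WFormula A K} :
      AlmostBoolean φ → AlmostBoolean ψ → AlmostBoolean (.plus φ ψ)
  | times {φ ψ : WFormula A K} :
      AlmostBoolean φ → AlmostBoolean ψ → AlmostBoolean (.times φ ψ)

/-- The constants of `K` occurring in a weighted formula. -/
def consts {A K : Type} : WFormula A K → Set K
  | .atom _ => ∅
  | .const k => {k}
  | .plus φ ψ => consts φ ∪ consts ψ
  | .times φ ψ => consts φ ∪ consts ψ
  | .sumFO _ φ => consts φ
  | .sumSO _ φ => consts φ
  | .prodFO _ φ => consts φ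

/-- `⊗`-restricted formulas: in every subformula `ψ ⊗ θ`, either `ψ` is almost boolean
or the constants of `ψ` and `θ` commute elementwise. -/
def TimesRestricted [Semiring K] : WFormula A K → Prop
  | .atom _ => True
  | .const _ => True
  | .plus φ ψ => TimesRestricted φ ∧ TimesRestricted ψ
  | .times φ ψ => TimesRestricted φ ∧ TimesRestricted ψ ∧
      (AlmostBoolean φ ∨ ∀ k ∈ consts φ, ∀ k' ∈ consts ψ, k * k' = k' * k)
  | .sumFO _ φ => TimesRestricted φ
  | .sumSO _ φ => TimesRestricted φ
  | .prodFO _ φ => TimesRestricted φ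

/-- `∏`-restricted formulas: in every subformula `∏ₓ ψ`, the formula `ψ` is
almost boolean. -/
def ProdRestricted {A K : Type} : WFormula A K → Prop
  | .atom _ => True
  | .const _ => True
  | .plus φ ψ => ProdRestricted φ ∧ ProdRestricted ψ
  | .times φ ψ => ProdRestricted φ ∧ ProdRestricted ψ
  | .sumFO _ φ => ProdRestricted φ
  | .sumSO _ φ => ProdRestricted φ
  | .prodFO _ φ => ProdRestricted φ ∧ AlmostBoolean φ

/-- Restricted formulas: both `⊗`-restricted and `∏`-restricted. -/
def RestrictedFormula [Semiring K] (φ : WFormula A K) : Prop :=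
  TimesRestricted φ ∧ ProdRestricted φ

/-- The subformula relation on weighted formulas. -/
inductive Subf {A K : Type} : WFormula A K → WFormula A K → Prop where
  | refl (φ : WFormula A K) : Subf φ φ
  | plusL {χ φ ψ : WFormula A K} : Subf χ φ → Subf χ (.plus φ ψ)
  | plusR {χ φ ψ : WFormula A K} : Subf χ ψ → Subf χ (.plus φ ψ)
  | timesL {χ φ ψ : WFormula A K} : Subf χ φ → Subf χ (.times φ ψ)
  | timesR {χ φ ψ : WFormula A K} : Subf χ ψ → Subf χ (.times φ ψ)
  | sumFO {χ φ : WFormula A K} {x : ℕ} : Subf χ φ → Subf χ (.sumFO x φ)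
  | sumSO {χ φ : WFormula A K} {X : ℕ} : Subf χ φ → Subf χ (.sumSO X φ)
  | prodFO {χ φ : WFormula A K} {x : ℕ} : Subf χ φ → Subf χ (.prodFO x φ)


section Helpers

variable {A K : Type}

lemma letterAt_map {B : Type} (f : A → B) (w : List A) (i : ℕ) :
    letterAt (w.map f) i = (letterAt w i).map f := by
  unfold letterAt
  split <;> simp

lemma exec_det {M : OPM A} {T : OPA A} {c : Config A T.Q} {m : Move A T.Q}
    {c₁ c₂ : Config A T.Q} (h₁ : Exec M T c m c₁) (h₂ : Exec M T c m c₂) : c₁ = c₂ := by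
  cases h₁ <;> cases h₂ <;> rfl

lemma execList_det {M : OPM A} {T : OPA A} {c : Config A T.Q} {ms : List (Move A T.Q)}
    {c₁ c₂ : Config A T.Q} (h₁ : ExecList M T c ms c₁) (h₂ : ExecList M T c ms c₂) :
    c₁ = c₂ := by
  induction h₁ generalizing c₂ with
  | nil => cases h₂; rfl
  | cons hstep _ ih =>
    cases h₂ with
    | cons hstep' hrest' => exact ih (exec_det hstep hstep' ▸ hrest')

/-- The letters consumed by a list of moves. -/
def consumedLetters {Q : Type} : List (Move A Q) → List A
  | [] => []
  | .push _ b _ :: t => b :: consumedLetters t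
  | .shift _ b _ :: t => b :: consumedLetters t
  | .pop _ _ _ :: t => consumedLetters t

lemma execList_consumed {M : OPM A} {T : OPA A} {c c' : Config A T.Q} {ms : List (Move A T.Q)}
    (h : ExecList M T c ms c') : c.input = consumedLetters ms ++ c'.input := by
  induction h with
  | nil => rfl
  | cons hstep _ ih => cases hstep <;> simpa [consumedLetters] using ih

lemma execList_length_le {M : OPM A} {T : OPA A} {c c' : Config A T.Q} {ms : List (Move A T.Q)}
    (h : ExecList M T c ms c') :
    ms.length + 2 * c'.input.length + c'.stack.length
      ≤ 2 * c.input.length + c.stack.length := by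
  induction h with
  | nil => simp
  | cons hstep _ ih => cases hstep <;> simp only [List.length_cons] at ih ⊢ <;> omega

instance instFiniteMove {Q : Type} [Finite A] [Finite Q] : Finite (Move A Q) := by
  apply Finite.of_injective (fun m : Move A Q => (match m with
    | .push q b r => Sum.inl (q, b, r)
    | .shift q b r => Sum.inr (Sum.inl (q, b, r))
    | .pop q p r => Sum.inr (Sum.inr (q, p, r)) : (Q × A × Q) ⊕ ((Q × A × Q) ⊕ (Q × Q × Q))))
  intro m m' h
  cases m <;> cases m' <;> simp_all

lemma accRuns_finite [Finite A] (M : OPM A) (T : OPA A) (w : List A) :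
    (AccRuns M T w).Finite := by
  haveI : Fintype T.Q := T.fin
  apply Set.Finite.subset
    (Set.Finite.prod (Set.finite_univ (α := T.Q))
      (Set.Finite.prod (List.finite_length_le (Move A T.Q) (2 * w.length))
        (Set.finite_univ (α := T.Q))))
  rintro ⟨qI, ms, qF⟩ ⟨-, -, hex⟩
  have := execList_length_le hex
  simp only [List.length_nil] at this
  exact ⟨trivial, by simpa using by omega, trivial⟩

lemma fiber_finite {A₁ A₂ : Type} [Finite A₁] (h : A₁ → A₂) (u : List A₂) :
    {w : List A₁ | w.map h = u}.Finite := by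
  apply (List.finite_length_eq A₁ u.length).subset
  intro w hw
  simpa using congrArg List.length hw

end Helpers

section ChainCongr

variable {A₁ A₂ : Type} {M₁ : OPM A₁} {M₂ : OPM A₂} {L₁ : ℕ → Option A₁} {L₂ : ℕ → Option A₂}

theorem chain_congr (hrel : ∀ i j, M₁.rel (L₁ i) (L₁ j) = M₂.rel (L₂ i) (L₂ j))
    {i j : ℕ} (h : Chain M₁ L₁ i j) : Chain M₂ L₂ i j := by
  refine Chain.rec (motive_1 := fun a b _ => ChainMid M₂ L₂ a b)
    (motive_2 := fun a b _ => ChainGap M₂ L₂ a b)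
    (motive_3 := fun a b _ => Chain M₂ L₂ a b)
    ?_ ?_ ?_ ?_ ?_ h
  · intro k j hgt _ ih; exact .last (by rw [← hrel]; exact hgt) ih
  · intro k k' j heq _ _ ih1 ih2; exact .step (by rw [← hrel]; exact heq) ih1 ih2
  · intro k; exact .adj k
  · intro k k' _ ih; exact .chain ih
  · intro i k j hlt _ _ ih1 ih2; exact .mk (by rw [← hrel]; exact hlt) ih1 ih2

end ChainCongr
section Pull

variable {A₁ A₂ K : Type} [Semiring K]

/-- Pull back a wOPA along a letter map. -/
@[reducible] def pullW (h : A₁ → A₂) (W : WOPA A₂ K) : WOPA A₁ K where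
  Q := W.Q
  fin := W.fin
  I := W.I
  F := W.F
  δpush := {t | (t.1, h t.2.1, t.2.2) ∈ W.δpush}
  δshift := {t | (t.1, h t.2.1, t.2.2) ∈ W.δshift}
  δpop := W.δpop
  wtpush := fun t => W.wtpush (t.1, h t.2.1, t.2.2)
  wtshift := fun t => W.wtshift (t.1, h t.2.1, t.2.2)
  wtpop := W.wtpop

lemma pullW_restricted (h : A₁ → A₂) (W : WOPA A₂ K) (hr : Restricted W) :
    Restricted (pullW h W) := fun t ht => hr t ht

variable {Q : Type}

/-- Map moves along a letter map. -/
def pMove (h : A₁ → A₂) : Move A₁ Q → Move A₂ Q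
  | .push q b r => .push q (h b) r
  | .shift q b r => .shift q (h b) r
  | .pop q p r => .pop q p r

/-- Map configurations along a letter map. -/
def pConf (h : A₁ → A₂) (c : Config A₁ Q) : Config A₂ Q :=
  ⟨c.stack.map (fun y => (h y.1, y.2)), c.state, c.input.map h⟩

lemma topSym_map (h : A₁ → A₂) (st : List (A₁ × Q)) :
    topSym (st.map (fun y => (h y.1, y.2))) = (topSym st).map h := by
  cases st <;> rfl

variable (M₂ : OPM A₂) (h : A₁ → A₂) (W : WOPA A₂ K)

lemma pull_exec_fwd {c c' : Config A₁ (pullW h W).Q} {m : Move A₁ (pullW h W).Q}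
    (hx : Exec (pullOPM M₂ h) (pullW h W).toOPA c m c') :
    Exec M₂ W.toOPA (pConf h c) (pMove h m) (pConf h c') := by
  cases hx with
  | push hrel hmem =>
      refine Exec.push ?_ hmem
      rw [topSym_map]
      exact hrel
  | shift hrel hmem => exact Exec.shift hrel hmem
  | pop hrel hmem =>
      refine Exec.pop ?_ hmem
      rw [List.head?_map]
      exact hrel

lemma pull_execList_fwd {c c' : Config A₁ (pullW h W).Q} {ms : List (Move A₁ (pullW h W).Q)}
    (hx : ExecList (pullOPM M₂ h) (pullW h W).toOPA c ms c') :
    ExecList M₂ W.toOPA (pConf h c) (ms.map (pMove h)) (pConf h c') := by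
  induction hx with
  | nil => exact .nil _
  | cons hstep _ ih => exact .cons (pull_exec_fwd M₂ h W hstep) ih

lemma pull_execList_bwd {d₀ d : Config A₂ W.Q} {ns : List (Move A₂ W.Q)}
    (hx : ExecList M₂ W.toOPA d₀ ns d) :
    ∀ c : Config A₁ W.Q, d₀ = pConf h c →
      ∃ ms c', ExecList (pullOPM M₂ h) (pullW h W).toOPA c ms c' ∧
        ns = ms.map (pMove h) ∧ d = pConf h c' := by
  induction hx with
  | nil =>
    intro c hc
    refine ⟨[], c, ?_, rfl, hc⟩
    exact ExecList.nil (M := pullOPM M₂ h) (T := (pullW h W).toOPA) c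
  | cons hstep hrest ih =>
    rintro ⟨st, q, inp⟩ hc
    cases hstep with
    | @push st₂ q₂ r₂ b₂ x₂ hrel hmem =>
      injection hc with hc1 hc2 hc3
      obtain ⟨b, x, rfl, rfl, rfl⟩ := List.map_eq_cons_iff.mp hc3.symm
      subst hc1 hc2
      obtain ⟨ms, c', hex, rfl, rfl⟩ := ih ⟨(b, q₂) :: st, r₂, x⟩ rfl
      refine ⟨.push q₂ b r₂ :: ms, c', .cons (Exec.push ?_ hmem) hex, rfl, rfl⟩
      show M₂.rel ((topSym st).map h) (some (h b)) = some PrecRel.lt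
      rw [← topSym_map h st]
      exact hrel
    | @shift st₂ p₂ q₂ r₂ a₂ b₂ x₂ hrel hmem =>
      injection hc with hc1 hc2 hc3
      obtain ⟨b, x, rfl, rfl, rfl⟩ := List.map_eq_cons_iff.mp hc3.symm
      obtain ⟨⟨a, p⟩, st', rfl, hap, rfl⟩ := List.map_eq_cons_iff.mp hc1.symm
      injection hap with hap1 hap2
      subst hc2 hap1 hap2
      obtain ⟨ms, c', hex, rfl, rfl⟩ := ih ⟨(b, p) :: st', r₂, x⟩ rfl
      exact ⟨.shift q₂ b r₂ :: ms, c', .cons (Exec.shift hrel hmem) hex, rfl, rfl⟩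
    | @pop st₂ p₂ q₂ r₂ a₂ x₂ hrel hmem =>
      injection hc with hc1 hc2 hc3
      obtain ⟨⟨a, p⟩, st', rfl, hap, rfl⟩ := List.map_eq_cons_iff.mp hc1.symm
      injection hap with hap1 hap2
      subst hc2 hc3 hap1 hap2
      obtain ⟨ms, c', hex, rfl, rfl⟩ := ih ⟨st', r₂, inp⟩ rfl
      refine ⟨.pop q₂ p r₂ :: ms, c', .cons (Exec.pop ?_ hmem) hex, rfl, rfl⟩
      show M₂.rel (some (h a)) (inp.head?.map h) = some PrecRel.gt
      rw [← List.head?_map]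
      exact hrel

end Pull
section PullBehavior

variable {A₁ A₂ K : Type} [Semiring K] (M₂ : OPM A₂) (h : A₁ → A₂) (W : WOPA A₂ K)

lemma pull_exec_same {c c₁ c₁' : Config A₁ (pullW h W).Q} {m m' : Move A₁ (pullW h W).Q}
    (h1 : Exec (pullOPM M₂ h) (pullW h W).toOPA c m c₁)
    (h2 : Exec (pullOPM M₂ h) (pullW h W).toOPA c m' c₁')
    (hm : pMove h m = pMove h m') : m = m' := by
  cases h1 <;> cases h2 <;> simp_all [pMove]

lemma pull_execList_map_inj {c d d' : Config A₁ (pullW h W).Q} {ms ms' : List (Move A₁ (pullW h W).Q)}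
    (h₁ : ExecList (pullOPM M₂ h) (pullW h W).toOPA c ms d)
    (h₂ : ExecList (pullOPM M₂ h) (pullW h W).toOPA c ms' d')
    (hmap : ms.map (pMove h) = ms'.map (pMove h)) : ms = ms' := by
  induction h₁ generalizing ms' d' with
  | nil => simpa using (List.map_eq_nil_iff.mp hmap.symm).symm
  | cons hstep hrest ih =>
    cases h₂ with
    | nil => simp at hmap
    | cons hstep' hrest' =>
      simp only [List.map_cons, List.cons.injEq] at hmap
      obtain ⟨hm, htail⟩ := hmap
      obtain rfl := pull_exec_same M₂ h W hstep hstep' hm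
      obtain rfl := exec_det hstep hstep'
      rw [ih hrest' htail]

lemma pull_accRuns (v : List A₁) :
    AccRuns M₂ W.toOPA (v.map h) =
      (fun ρ : W.Q × List (Move A₁ W.Q) × W.Q => (ρ.1, ρ.2.1.map (pMove h), ρ.2.2)) ''
        AccRuns (pullOPM M₂ h) (pullW h W).toOPA v := by
  ext ⟨qI, ns, qF⟩
  constructor
  · rintro ⟨hI, hF, hex⟩
    obtain ⟨ms, ⟨st', q', x'⟩, hex₁, rfl, hc'⟩ :=
      pull_execList_bwd M₂ h W hex ⟨[], qI, v⟩ rfl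
    injection hc' with h1 h2 h3
    obtain rfl := (List.map_eq_nil_iff.mp h1.symm)
    obtain rfl := (List.map_eq_nil_iff.mp h3.symm)
    subst h2
    exact ⟨(qI, ms, qF), ⟨hI, hF, hex₁⟩, rfl⟩
  · rintro ⟨⟨qI', ms, qF'⟩, ⟨hI, hF, hex⟩, heq⟩
    injection heq with h1 h23
    injection h23 with h2 h3
    subst h1 h2 h3
    exact ⟨hI, hF, pull_execList_fwd M₂ h W hex⟩

lemma pull_behavior (v : List A₁) :
    behavior (pullOPM M₂ h) (pullW h W) v = behavior M₂ W (v.map h) := by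
  unfold behavior
  rw [pull_accRuns]
  rw [finsum_mem_image]
  · apply finsum_mem_congr rfl
    intro ρ _
    rw [List.map_map]
    congr 1
    apply List.map_congr_left
    intro m _
    cases m <;> rfl
  · rintro ⟨q1, ms1, f1⟩ h1 ⟨q2, ms2, f2⟩ h2 heq
    injection heq with e1 e23
    injection e23 with e2 e3
    subst e1 e3
    obtain rfl := pull_execList_map_inj M₂ h W h1.2.2 h2.2.2 e2
    rfl

end PullBehavior
section Master

variable {A₁ A₂ K D : Type} [Semiring K]
variable (M₁ : OPM A₁) (M₂ : OPM A₂) (hh : A₁ → A₂) (W : WOPA A₁ K)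
variable (d₀ : D) (g : D → A₁ → D) (G : Set D)

/-- The projection automaton: guesses preimage letters, remembering the guessed letter
and a deterministic "flag" computed from the guessed letters. -/
@[reducible] def masterW [Fintype A₁] [Fintype D] : WOPA A₂ K where
  Q := W.Q × (D × Option A₁)
  fin := by haveI := W.fin; infer_instance
  I := {p | p.1 ∈ W.I ∧ p.2 = (d₀, none)}
  F := {p | p.1 ∈ W.F ∧ p.2.1 ∈ G}
  δpush := {t | ∃ q μ b r, (q, b, r) ∈ W.δpush ∧ t = ((q, μ), hh b, (r, (g μ.1 b, some b)))}
  δshift := {t | ∃ q μ b r, (q, b, r) ∈ W.δshift ∧ t = ((q, μ), hh b, (r, (g μ.1 b, some b)))}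
  δpop := {t | ∃ q μ p μ' r, (q, p, r) ∈ W.δpop ∧ t = ((q, μ), (p, μ'), (r, μ))}
  wtpush := fun t => match t.2.2.2.2 with
    | some b => W.wtpush (t.1.1, b, t.2.2.1)
    | none => 1
  wtshift := fun t => match t.2.2.2.2 with
    | some b => W.wtshift (t.1.1, b, t.2.2.1)
    | none => 1
  wtpop := fun t => W.wtpop (t.1.1, t.2.1.1, t.2.2.1)

lemma masterW_restricted [Fintype A₁] [Fintype D] (hr : Restricted W) :
    Restricted (masterW hh W d₀ g G) := by
  rintro t ⟨q, μ, p, μ', r, hm, rfl⟩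
  exact hr _ hm

variable [Fintype A₁] [Fintype D]

/-- Lift a configuration. -/
def mConf (μ : D × Option A₁) (S : List (D × Option A₁)) (c : Config A₁ W.Q) :
    Config A₂ (W.Q × (D × Option A₁)) :=
  ⟨(c.stack.zip S).map (fun y => (hh y.1.1, (y.1.2, y.2))), (c.state, μ), c.input.map hh⟩

/-- Lift a list of moves. -/
def mMoves : (D × Option A₁) → List (D × Option A₁) → List (Move A₁ W.Q) →
    List (Move A₂ (W.Q × (D × Option A₁)))
  | _, _, [] => []
  | μ, S, .push q b r :: t =>
      .push (q, μ) (hh b) (r, (g μ.1 b, some b)) :: mMoves (g μ.1 b, some b) (μ :: S) t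
  | μ, S, .shift q b r :: t =>
      .shift (q, μ) (hh b) (r, (g μ.1 b, some b)) :: mMoves (g μ.1 b, some b) S t
  | μ, S, .pop q p r :: t =>
      .pop (q, μ) (p, S.headD (d₀, none)) (r, μ) :: mMoves μ S.tail t

/-- Evolution of the memory data along a list of moves. -/
def mEv {Q : Type} : (D × Option A₁) × List (D × Option A₁) → List (Move A₁ Q) →
    (D × Option A₁) × List (D × Option A₁)
  | z, [] => z
  | (μ, S), .push _ b _ :: t => mEv ((g μ.1 b, some b), μ :: S) t
  | (μ, S), .shift _ b _ :: t => mEv ((g μ.1 b, some b), S) t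
  | (μ, S), .pop _ _ _ :: t => mEv (μ, S.tail) t

lemma mEv_flag {Q : Type} : ∀ (ms : List (Move A₁ Q)) (d : D) (o : Option A₁)
    (S : List (D × Option A₁)),
    (mEv g ((d, o), S) ms).1.1 = (consumedLetters ms).foldl g d
  | [], d, o, S => rfl
  | .push _ b _ :: t, d, o, S => by
      simp only [mEv, consumedLetters, List.foldl_cons]
      exact mEv_flag t (g d b) (some b) _
  | .shift _ b _ :: t, d, o, S => by
      simp only [mEv, consumedLetters, List.foldl_cons]
      exact mEv_flag t (g d b) (some b) _
  | .pop _ _ _ :: t, d, o, S => by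
      simp only [mEv, consumedLetters]
      exact mEv_flag t d o _

lemma topSym_zip_map (st : List (A₁ × W.Q)) (S : List (D × Option A₁))
    (hlen : S.length = st.length) :
    topSym ((st.zip S).map (fun y => (hh y.1.1, (y.1.2, y.2)))) = (topSym st).map hh := by
  cases st <;> cases S <;> simp_all [topSym]

lemma mMoves_wt : ∀ (ms : List (Move A₁ W.Q)) (μ : D × Option A₁) (S : List (D × Option A₁)),
    ((mMoves hh W d₀ g μ S ms).map (moveWt (masterW hh W d₀ g G))).prod =
      (ms.map (moveWt W)).prod
  | [], _, _ => rfl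
  | .push q b r :: t, μ, S => by
      simp only [mMoves]
      simp only [List.map_cons, List.prod_cons]
      rw [mMoves_wt t _ _]
      rfl
  | .shift q b r :: t, μ, S => by
      simp only [mMoves]
      simp only [List.map_cons, List.prod_cons]
      rw [mMoves_wt t _ _]
      rfl
  | .pop q p r :: t, μ, S => by
      simp only [mMoves]
      simp only [List.map_cons, List.prod_cons]
      rw [mMoves_wt t _ _]
      rfl

lemma mMoves_inj : ∀ (ms ms' : List (Move A₁ W.Q)) (μ μ' : D × Option A₁)
    (S S' : List (D × Option A₁)),
    mMoves hh W d₀ g μ S ms = mMoves hh W d₀ g μ' S' ms' → ms = ms'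
  | [], [], _, _, _, _, _ => rfl
  | [], .push _ _ _ :: _, _, _, _, _, hI | [], .shift _ _ _ :: _, _, _, _, _, hI
  | [], .pop _ _ _ :: _, _, _, _, _, hI | .push _ _ _ :: _, [], _, _, _, _, hI
  | .shift _ _ _ :: _, [], _, _, _, _, hI | .pop _ _ _ :: _, [], _, _, _, _, hI => by
      simp [mMoves] at hI
  | .push q b r :: t, .push q' b' r' :: t', μ, μ', S, S', hI => by
      simp only [mMoves] at hI
      simp only [List.cons.injEq, Move.push.injEq, Prod.mk.injEq, Option.some.injEq] at hI
      obtain ⟨⟨⟨hq, -⟩, -, hr, -, hb⟩, ht⟩ := hI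
      subst hq hr hb
      rw [mMoves_inj t t' _ _ _ _ ht]
  | .shift q b r :: t, .shift q' b' r' :: t', μ, μ', S, S', hI => by
      simp only [mMoves] at hI
      simp only [List.cons.injEq, Move.shift.injEq, Prod.mk.injEq, Option.some.injEq] at hI
      obtain ⟨⟨⟨hq, -⟩, -, hr, -, hb⟩, ht⟩ := hI
      subst hq hr hb
      rw [mMoves_inj t t' _ _ _ _ ht]
  | .pop q p r :: t, .pop q' p' r' :: t', μ, μ', S, S', hI => by
      simp only [mMoves] at hI
      simp only [List.cons.injEq, Move.pop.injEq, Prod.mk.injEq] at hI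
      obtain ⟨⟨⟨hq, -⟩, ⟨hp, -⟩, hr, -⟩, ht⟩ := hI
      subst hq hp hr
      rw [mMoves_inj t t' _ _ _ _ ht]
  | .push _ _ _ :: _, .shift _ _ _ :: _, _, _, _, _, hI
  | .push _ _ _ :: _, .pop _ _ _ :: _, _, _, _, _, hI
  | .shift _ _ _ :: _, .push _ _ _ :: _, _, _, _, _, hI
  | .shift _ _ _ :: _, .pop _ _ _ :: _, _, _, _, _, hI
  | .pop _ _ _ :: _, .push _ _ _ :: _, _, _, _, _, hI
  | .pop _ _ _ :: _, .shift _ _ _ :: _, _, _, _, _, hI => by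
      simp only [mMoves] at hI
      simp at hI

end Master
section Master2

variable {A₁ A₂ K D : Type} [Semiring K]
variable (M₁ : OPM A₁) (M₂ : OPM A₂) (hh : A₁ → A₂) (W : WOPA A₁ K)
variable (d₀ : D) (g : D → A₁ → D) (G : Set D)
variable [Fintype A₁] [Fintype D]

lemma master_fwd (hM : ∀ o o', M₁.rel o o' = M₂.rel (o.map hh) (o'.map hh))
    {c c' : Config A₁ W.Q} {ms : List (Move A₁ W.Q)}
    (hx : ExecList M₁ W.toOPA c ms c') :
    ∀ (μ : D × Option A₁) (S : List (D × Option A₁)), S.length = c.stack.length →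
      ExecList M₂ (masterW hh W d₀ g G).toOPA (mConf hh W μ S c)
          (mMoves hh W d₀ g μ S ms)
          (mConf hh W (mEv g (μ, S) ms).1 (mEv g (μ, S) ms).2 c') ∧
        (mEv g (μ, S) ms).2.length = c'.stack.length := by
  induction hx with
  | nil =>
    intro μ S hlen
    exact ⟨ExecList.nil _, hlen⟩
  | @cons c c₂ c'' m ms hstep hrest ih =>
    intro μ S hlen
    cases hstep with
    | @push st q r b x hrel hmem =>
      obtain ⟨hex, hlen'⟩ := ih (g μ.1 b, some b) (μ :: S) (by simpa using hlen)
      refine ⟨.cons (Exec.push ?_ ?_) hex, hlen'⟩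
      · show M₂.rel (topSym ((st.zip S).map _)) (some (hh b)) = some PrecRel.lt
        rw [topSym_zip_map hh W st S hlen]
        exact (hM (topSym st) (some b)).symm.trans hrel
      · exact ⟨q, μ, b, r, hmem, rfl⟩
    | @shift st p q r a b x hrel hmem =>
      obtain ⟨μp, S₀, rfl⟩ : ∃ y t, S = y :: t := by
        cases S
        · simp at hlen
        · exact ⟨_, _, rfl⟩
      obtain ⟨hex, hlen'⟩ := ih (g μ.1 b, some b) (μp :: S₀) (by simpa using hlen)
      refine ⟨.cons (Exec.shift ?_ ?_) hex, hlen'⟩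
      · exact (hM (some a) (some b)).symm.trans hrel
      · exact ⟨q, μ, b, r, hmem, rfl⟩
    | @pop st p q r a x hrel hmem =>
      obtain ⟨μp, S₀, rfl⟩ : ∃ y t, S = y :: t := by
        cases S
        · simp at hlen
        · exact ⟨_, _, rfl⟩
      obtain ⟨hex, hlen'⟩ := ih μ S₀ (by simpa using hlen)
      refine ⟨.cons (Exec.pop ?_ ?_) hex, hlen'⟩
      · show M₂.rel (some (hh a)) ((x.map hh).head?) = some PrecRel.gt
        rw [List.head?_map]
        exact (hM (some a) x.head?).symm.trans hrel
      · exact ⟨q, μ, p, μp, r, hmem, rfl⟩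

lemma master_bwd (hM : ∀ o o', M₁.rel o o' = M₂.rel (o.map hh) (o'.map hh))
    {d₀c d' : Config A₂ (masterW hh W d₀ g G).Q}
    {ns : List (Move A₂ (masterW hh W d₀ g G).Q)}
    (hx : ExecList M₂ (masterW hh W d₀ g G).toOPA d₀c ns d') :
    ∀ (σ : List (A₁ × W.Q)) (q : W.Q) (μ : D × Option A₁) (S : List (D × Option A₁))
      (v : List A₂), d₀c = ⟨(σ.zip S).map (fun y => (hh y.1.1, (y.1.2, y.2))), (q, μ), v⟩ →
      S.length = σ.length → ∀ (x₁ : List A₁), x₁.map hh = d'.input →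
      ∃ (w : List A₁) (ms : List (Move A₁ W.Q)) (σ' : List (A₁ × W.Q))
        (S' : List (D × Option A₁)),
        w.map hh ++ d'.input = v ∧ S'.length = σ'.length ∧
        d'.stack = (σ'.zip S').map (fun y => (hh y.1.1, (y.1.2, y.2))) ∧
        ExecList M₁ W.toOPA ⟨σ, q, w ++ x₁⟩ ms ⟨σ', d'.state.1, x₁⟩ ∧
        ns = mMoves hh W d₀ g μ S ms := by
  induction hx with
  | nil =>
    intro σ q μ S v hc hlen x₁ hx₁
    subst hc
    refine ⟨[], [], σ, S, by simp, hlen, rfl, ?_, rfl⟩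
    exact ExecList.nil (M := M₁) (T := W.toOPA) _
  | @cons c c₂ c'' m ms hstep hrest ih =>
    intro σ q μ S v hc hlen x₁ hx₁
    cases hstep with
    | @push st₂ qq rr b₂ x₂ hrel hmem =>
      injection hc with hc1 hc2 hc3
      subst hc1 hc2 hc3
      obtain ⟨q₀, μ₀, b, r, hm, heq⟩ := hmem
      injection heq with he1 he23
      injection he1 with ha hb
      subst ha hb
      injection he23 with he2 he3
      subst he2 he3
      obtain ⟨w₂, ms₂, σ', S', hw, hlen', hstk, hex₁, rfl⟩ :=
        ih ((b, q) :: σ) r (g μ.1 b, some b) (μ :: S) x₂ rfl (by simpa using hlen) x₁ hx₁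
      refine ⟨b :: w₂, .push q b r :: ms₂, σ', S', by simp [hw], hlen', hstk,
        .cons (Exec.push ?_ hm) hex₁, rfl⟩
      refine (hM (topSym σ) (some b)).trans ?_
      rw [← topSym_zip_map hh W σ S hlen]
      exact hrel
    | @shift st₂ pp qq rr a₂ b₂ x₂ hrel hmem =>
      injection hc with hc1 hc2 hc3
      subst hc2 hc3
      obtain ⟨⟨a, p⟩, σ₀, rfl⟩ : ∃ y t, σ = y :: t := by
        cases σ
        · simp at hc1
        · exact ⟨_, _, rfl⟩
      obtain ⟨μp, S₀, rfl⟩ : ∃ y t, S = y :: t := by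
        cases S
        · simp at hlen
        · exact ⟨_, _, rfl⟩
      injection hc1 with hd1 hd2
      injection hd1 with hd11 hd12
      subst hd11 hd12 hd2
      obtain ⟨q₀, μ₀, b, r, hm, heq⟩ := hmem
      injection heq with he1 he23
      injection he1 with ha hb
      subst ha hb
      injection he23 with he2 he3
      subst he2 he3
      obtain ⟨w₂, ms₂, σ', S', hw, hlen', hstk, hex₁, rfl⟩ :=
        ih ((b, p) :: σ₀) r (g μ.1 b, some b) (μp :: S₀) x₂ rfl (by simpa using hlen) x₁ hx₁
      refine ⟨b :: w₂, .shift q b r :: ms₂, σ', S', by simp [hw], hlen', hstk,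
        .cons (Exec.shift ?_ hm) hex₁, rfl⟩
      exact (hM (some a) (some b)).trans hrel
    | @pop st₂ pp qq rr a₂ x₂ hrel hmem =>
      injection hc with hc1 hc2 hc3
      subst hc2 hc3
      obtain ⟨⟨a, p⟩, σ₀, rfl⟩ : ∃ y t, σ = y :: t := by
        cases σ
        · simp at hc1
        · exact ⟨_, _, rfl⟩
      obtain ⟨μp, S₀, rfl⟩ : ∃ y t, S = y :: t := by
        cases S
        · simp at hlen
        · exact ⟨_, _, rfl⟩
      injection hc1 with hd1 hd2
      injection hd1 with hd11 hd12
      subst hd11 hd12 hd2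
      obtain ⟨q₀, μ₀, p₀, μ₀', r, hm, heq⟩ := hmem
      injection heq with he1 he23
      injection he1 with ha hb
      subst ha hb
      injection he23 with he2 he3
      injection he2 with he21 he22
      subst he21 he22 he3
      obtain ⟨w₂, ms₂, σ', S', hw, hlen', hstk, hex₁, rfl⟩ :=
        ih σ₀ r μ S₀ x₂ rfl (by simpa using hlen) x₁ hx₁
      refine ⟨w₂, .pop q p r :: ms₂, σ', S', hw, hlen', hstk,
        .cons (Exec.pop ?_ hm) hex₁, rfl⟩
      have hv : (w₂ ++ x₁).map hh = x₂ := by rw [List.map_append, hx₁, hw]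
      refine (hM (some a) ((w₂ ++ x₁).head?)).trans ?_
      show M₂.rel ((some a).map hh) ((w₂ ++ x₁).head?.map hh) = some PrecRel.gt
      rw [← List.head?_map, hv]
      exact hrel

end Master2
section Master3

variable {A₁ A₂ K D : Type} [Semiring K]
variable (M₁ : OPM A₁) (M₂ : OPM A₂) (hh : A₁ → A₂) (W : WOPA A₁ K)
variable (d₀ : D) (g : D → A₁ → D) (G : Set D)
variable [Fintype A₁] [Fintype D]

/-- Lift an accepting run. -/
def mRun (ρ : W.Q × List (Move A₁ W.Q) × W.Q) :
    (W.Q × (D × Option A₁)) × List (Move A₂ (W.Q × (D × Option A₁))) ×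
      (W.Q × (D × Option A₁)) :=
  ((ρ.1, (d₀, none)), mMoves hh W d₀ g (d₀, none) [] ρ.2.1,
    (ρ.2.2, (mEv g (((d₀, none) : D × Option A₁), []) ρ.2.1).1))

lemma master_accRuns (hM : ∀ o o', M₁.rel o o' = M₂.rel (o.map hh) (o'.map hh))
    (u : List A₂) :
    AccRuns M₂ (masterW hh W d₀ g G).toOPA u =
      ⋃ w ∈ {w : List A₁ | w.map hh = u ∧ w.foldl g d₀ ∈ G},
        mRun hh W d₀ g '' AccRuns M₁ W.toOPA w := by
  ext ⟨⟨qI, μI⟩, ns, qF, μF⟩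
  simp only [Set.mem_iUnion, Set.mem_image, AccRuns, Set.mem_setOf_eq]
  constructor
  · rintro ⟨⟨hI, hμI⟩, ⟨hF, hG⟩, hex⟩
    subst hμI
    obtain ⟨w, ms, σ', S', hw, hlen', hstk, hex₁, rfl⟩ :=
      master_bwd M₁ M₂ hh W d₀ g G hM hex [] qI (d₀, none) [] u rfl rfl [] rfl
    obtain rfl : σ' = [] := by
      have hz := List.map_eq_nil_iff.mp hstk.symm
      rcases List.zip_eq_nil_iff.mp hz with h | h
      · exact h
      · subst h; simpa using hlen'.symm
    rw [List.append_nil] at hex₁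
    have hwu : w.map hh = u := by simpa using hw
    have hcons : w = consumedLetters ms := by
      have := execList_consumed hex₁
      simpa using this
    have hflag : μF = (mEv g (((d₀, none) : D × Option A₁), []) ms).1 := by
      have hfwd := (master_fwd M₁ M₂ hh W d₀ g G hM hex₁ (d₀, none) [] rfl).1
      rw [show (mConf hh W (d₀, none) [] ⟨[], qI, w⟩ :
          Config A₂ (W.Q × (D × Option A₁))) = ⟨[], (qI, (d₀, none)), w.map hh⟩ from rfl,
        hwu] at hfwd
      have hdet := execList_det hex hfwd
      have : (⟨[], (qF, μF), []⟩ : Config A₂ (W.Q × (D × Option A₁))).state =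
          (mConf hh W (mEv g ((d₀, none), []) ms).1 (mEv g ((d₀, none), []) ms).2
            ⟨[], qF, []⟩).state := by rw [hdet]
      simpa [mConf] using this
    refine ⟨w, ⟨hwu, ?_⟩, (qI, ms, qF), ⟨hI, hF, hex₁⟩, ?_⟩
    · have hfl : μF.1 = List.foldl g d₀ w := by
        rw [hflag, mEv_flag g ms d₀ none [], ← hcons]
      exact hfl ▸ hG
    · rw [mRun, ← hflag]
  · rintro ⟨w, ⟨hwu, hG⟩, ⟨qI', ms, qF'⟩, ⟨hI, hF, hex₁⟩, heq⟩
    simp only [mRun, Prod.mk.injEq] at heq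
    obtain ⟨⟨hq1, hq2⟩, hmv, hq3, hq4⟩ := heq
    subst hq1 hq2 hmv hq3 hq4
    have hfwd := (master_fwd M₁ M₂ hh W d₀ g G hM hex₁ (d₀, none) [] rfl).1
    rw [show (mConf hh W (d₀, none) [] ⟨[], qI', w⟩ :
        Config A₂ (W.Q × (D × Option A₁))) = ⟨[], (qI', (d₀, none)), w.map hh⟩ from rfl,
      hwu] at hfwd
    refine ⟨⟨hI, rfl⟩, ⟨hF, ?_⟩, ?_⟩
    · rw [mEv_flag g ms d₀ none []]
      have hcons : consumedLetters ms = w := by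
        have := execList_consumed hex₁
        simpa using this.symm
      rw [hcons]
      exact hG
    · exact hfwd

lemma behavior_master (hM : ∀ o o', M₁.rel o o' = M₂.rel (o.map hh) (o'.map hh))
    (u : List A₂) :
    behavior M₂ (masterW hh W d₀ g G) u =
      ∑ᶠ w ∈ {w : List A₁ | w.map hh = u ∧ w.foldl g d₀ ∈ G}, behavior M₁ W w := by
  haveI : Finite A₁ := Finite.of_fintype A₁
  unfold behavior
  rw [master_accRuns M₁ M₂ hh W d₀ g G hM u]
  rw [finsum_mem_biUnion]
  · apply finsum_mem_congr rfl
    intro w hw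
    rw [finsum_mem_image]
    · apply finsum_mem_congr rfl
      intro ρ _
      exact mMoves_wt hh W d₀ g G ρ.2.1 (d₀, none) []
    · rintro ⟨q1, ms1, f1⟩ h1 ⟨q2, ms2, f2⟩ h2 heq
      simp only [mRun, Prod.mk.injEq] at heq
      obtain ⟨⟨hq, -⟩, hms, hf, -⟩ := heq
      obtain rfl := mMoves_inj hh W d₀ g ms1 ms2 _ _ _ _ hms
      subst hq hf
      rfl
  · intro w hw w' hw' hne
    simp only [Function.onFun]
    rw [Set.disjoint_left]
    rintro ρ₂ ⟨⟨a1, b1, c1⟩, hρ, rfl⟩ ⟨⟨a2, b2, c2⟩, hρ', heq⟩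
    simp only [mRun, Prod.mk.injEq] at heq
    obtain ⟨-, hms, -⟩ := heq
    obtain rfl := mMoves_inj hh W d₀ g b2 b1 _ _ _ _ hms
    apply hne
    have h1 := execList_consumed hρ.2.2
    have h2 := execList_consumed hρ'.2.2
    simp only [List.append_nil] at h1 h2
    rw [← h1] at h2
    exact h2.symm
  · exact ((fiber_finite hh u).subset (fun w hw => hw.1))
  · intro w hw
    exact (accRuns_finite M₁ W.toOPA w).image _

end Master3
section Logic

variable {A K : Type}

lemma BSat_congr (M : OPM A) (w : List A) (β : BFormula A) :
    ∀ {σ σ' : ℕ → ℕ} {τ τ' : ℕ → Set ℕ},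
    (∀ y, Sum.inl y ∈ β.free → σ y = σ' y) →
    (∀ Y, Sum.inr Y ∈ β.free → τ Y = τ' Y) →
    (BSat M w σ τ β ↔ BSat M w σ' τ' β) := by
  induction β with
  | lab a x =>
    intro σ σ' τ τ' hσ hτ
    simp only [BSat]
    rw [hσ x (by simp [BFormula.free])]
  | le x y =>
    intro σ σ' τ τ' hσ hτ
    simp only [BSat]
    rw [hσ x (by simp [BFormula.free]), hσ y (by simp [BFormula.free])]
  | chainR x y =>
    intro σ σ' τ τ' hσ hτ
    simp only [BSat]
    rw [hσ x (by simp [BFormula.free]), hσ y (by simp [BFormula.free])]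
  | mem x X =>
    intro σ σ' τ τ' hσ hτ
    simp only [BSat]
    rw [hσ x (by simp [BFormula.free]), hτ X (by simp [BFormula.free])]
  | not β ih =>
    intro σ σ' τ τ' hσ hτ
    simp only [BSat]
    exact not_congr (ih hσ hτ)
  | or β₁ β₂ ih₁ ih₂ =>
    intro σ σ' τ τ' hσ hτ
    simp only [BSat]
    exact or_congr
      (ih₁ (fun y hy => hσ y (by simp [BFormula.free, hy]))
        (fun Y hY => hτ Y (by simp [BFormula.free, hY])))
      (ih₂ (fun y hy => hσ y (by simp [BFormula.free, hy]))
        (fun Y hY => hτ Y (by simp [BFormula.free, hY])))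
  | exFO x β ih =>
    intro σ σ' τ τ' hσ hτ
    simp only [BSat]
    refine exists_congr fun i => and_congr_right fun _ => ih ?_ ?_
    · intro y hy
      by_cases hxy : y = x
      · subst hxy; simp
      · rw [Function.update_of_ne hxy, Function.update_of_ne hxy]
        exact hσ y (by simp [BFormula.free, hy, hxy])
    · intro Y hY
      exact hτ Y (by simp [BFormula.free, hY])
  | exSO X β ih =>
    intro σ σ' τ τ' hσ hτ
    simp only [BSat]
    refine exists_congr fun I => and_congr_right fun _ => ih ?_ ?_
    · intro y hy
      exact hσ y (by simp [BFormula.free, hy])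
    · intro Y hY
      by_cases hXY : Y = X
      · subst hXY; simp
      · rw [Function.update_of_ne hXY, Function.update_of_ne hXY]
        exact hτ Y (by simp [BFormula.free, hY, hXY])

lemma sem_congr [Semiring K] (M : OPM A) (w : List A) (φ : WFormula A K) :
    ∀ {σ σ' : ℕ → ℕ} {τ τ' : ℕ → Set ℕ},
    (∀ y, Sum.inl y ∈ φ.free → σ y = σ' y) →
    (∀ Y, Sum.inr Y ∈ φ.free → τ Y = τ' Y) →
    sem M w σ τ φ = sem M w σ' τ' φ := by
  induction φ with
  | atom β =>
    intro σ σ' τ τ' hσ hτ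
    simp only [sem]
    rw [BSat_congr M w β hσ hτ]
  | const k => intro _ _ _ _ _ _; rfl
  | plus φ ψ ihφ ihψ =>
    intro σ σ' τ τ' hσ hτ
    simp only [sem]
    rw [ihφ (fun y hy => hσ y (by simp [WFormula.free, hy]))
        (fun Y hY => hτ Y (by simp [WFormula.free, hY])),
      ihψ (fun y hy => hσ y (by simp [WFormula.free, hy]))
        (fun Y hY => hτ Y (by simp [WFormula.free, hY]))]
  | times φ ψ ihφ ihψ =>
    intro σ σ' τ τ' hσ hτ
    simp only [sem]
    rw [ihφ (fun y hy => hσ y (by simp [WFormula.free, hy]))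
        (fun Y hY => hτ Y (by simp [WFormula.free, hY])),
      ihψ (fun y hy => hσ y (by simp [WFormula.free, hy]))
        (fun Y hY => hτ Y (by simp [WFormula.free, hY]))]
  | sumFO x φ ih =>
    intro σ σ' τ τ' hσ hτ
    simp only [sem]
    refine Finset.sum_congr rfl fun i _ => ih ?_ ?_
    · intro y hy
      by_cases hxy : y = x
      · subst hxy; simp
      · rw [Function.update_of_ne hxy, Function.update_of_ne hxy]
        exact hσ y (by simp [WFormula.free, hy, hxy])
    · intro Y hY
      exact hτ Y (by simp [WFormula.free, hY])
  | sumSO X φ ih =>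
    intro σ σ' τ τ' hσ hτ
    simp only [sem]
    refine Finset.sum_congr rfl fun I _ => ih ?_ ?_
    · intro y hy
      exact hσ y (by simp [WFormula.free, hy])
    · intro Y hY
      by_cases hXY : Y = X
      · subst hXY; simp
      · rw [Function.update_of_ne hXY, Function.update_of_ne hXY]
        exact hτ Y (by simp [WFormula.free, hY, hXY])
  | prodFO x φ ih =>
    intro σ σ' τ τ' hσ hτ
    simp only [sem]
    refine congrArg List.prod (List.map_congr_left fun i _ => ih ?_ ?_)
    · intro y hy
      by_cases hxy : y = x
      · subst hxy; simp
      · rw [Function.update_of_ne hxy, Function.update_of_ne hxy]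
        exact hσ y (by simp [WFormula.free, hy, hxy])
    · intro Y hY
      exact hτ Y (by simp [WFormula.free, hY])

end Logic
section Bits

/-- The list of bits of length `n` determined by a set of (1-based) positions. -/
def setBits (n : ℕ) (I : Finset ℕ) : List Bool :=
  (List.range n).map (fun k => decide (k + 1 ∈ I))

@[simp] lemma setBits_length (n : ℕ) (I : Finset ℕ) : (setBits n I).length = n := by
  simp [setBits]

lemma setBits_get? (n : ℕ) (I : Finset ℕ) (k : ℕ) :
    (setBits n I)[k]? = if k < n then some (decide (k + 1 ∈ I)) else none := by
  rw [setBits, List.getElem?_map]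
  by_cases hk : k < n
  · rw [List.getElem?_range hk, if_pos hk]; rfl
  · rw [if_neg hk, List.getElem?_eq_none (by simpa using Nat.le_of_not_lt hk)]; rfl

/-- The set of positions where a bit list is `true`. -/
def bitIdx (bs : List Bool) : Finset ℕ :=
  (Finset.Icc 1 bs.length).filter (fun j => bs[j - 1]? = some true)

lemma bitIdx_subset (bs : List Bool) : bitIdx bs ⊆ Finset.Icc 1 bs.length :=
  Finset.filter_subset _ _

lemma setBits_bitIdx (bs : List Bool) : setBits bs.length (bitIdx bs) = bs := by
  apply List.ext_getElem?
  intro k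
  rw [setBits_get?]
  by_cases hk : k < bs.length
  · rw [if_pos hk]
    have hb : bs[k]? = some (bs.get ⟨k, hk⟩) := by simp [hk]
    set b := bs.get ⟨k, hk⟩ with hbdef
    rw [hb]
    congr 1
    have hmem : k + 1 ∈ bitIdx bs ↔ b = true := by
      simp only [bitIdx, Finset.mem_filter, Finset.mem_Icc, Nat.add_sub_cancel]
      rw [hb]
      constructor
      · rintro ⟨-, h⟩; simpa using h
      · intro h; exact ⟨⟨by omega, by omega⟩, by simp [h]⟩
    rcases b with _ | _
    · simp [hmem]
    · simp [hmem]
  · rw [if_neg hk, eq_comm]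
    exact List.getElem?_eq_none (by omega)

lemma bitIdx_setBits (n : ℕ) (I : Finset ℕ) (hI : I ⊆ Finset.Icc 1 n) :
    bitIdx (setBits n I) = I := by
  ext j
  simp only [bitIdx, Finset.mem_filter, Finset.mem_Icc, setBits_length]
  rw [setBits_get?]
  constructor
  · rintro ⟨⟨h1, h2⟩, h⟩
    rw [if_pos (by omega)] at h
    have : j - 1 + 1 = j := by omega
    rw [this] at h
    simpa using h
  · intro hj
    have := Finset.mem_Icc.mp (hI hj)
    refine ⟨⟨this.1, this.2⟩, ?_⟩
    rw [if_pos (by omega), show j - 1 + 1 = j by omega]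
    simp [hj]

lemma count_setBits (n : ℕ) (I : Finset ℕ) (hI : I ⊆ Finset.Icc 1 n) :
    (setBits n I).count true = I.card := by
  induction n generalizing I with
  | zero =>
    have : I = ∅ := Finset.subset_empty.mp (by simpa using hI)
    simp [this, setBits]
  | succ m ih =>
    rw [setBits, List.range_succ, List.map_append, List.count_append]
    by_cases hm : m + 1 ∈ I
    · have hsub : I \ {m + 1} ⊆ Finset.Icc 1 m := by
        intro j hj
        simp only [Finset.mem_sdiff, Finset.mem_singleton] at hj
        have := Finset.mem_Icc.mp (hI hj.1)
        exact Finset.mem_Icc.mpr ⟨this.1, by omega⟩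
      have := ih (I \ {m + 1}) hsub
      have hcongr : (List.range m).map (fun k => decide (k + 1 ∈ I)) =
          (List.range m).map (fun k => decide (k + 1 ∈ I \ {m + 1})) := by
        apply List.map_congr_left
        intro k hk
        have hk' := List.mem_range.mp hk
        congr 1
        simp only [Finset.mem_sdiff, Finset.mem_singleton, eq_iff_iff]
        constructor
        · intro h; exact ⟨h, by omega⟩
        · tauto
      rw [setBits] at this
      rw [hcongr, this]
      have hcard : I.card = (I \ {m + 1}).card + 1 := by
        rw [Finset.card_sdiff_of_subset (by simpa using hm)]
        have : 1 ≤ I.card := Finset.card_pos.mpr ⟨m + 1, hm⟩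
        simp
        omega
      simp [hm, hcard]
    · have hsub : I ⊆ Finset.Icc 1 m := by
        intro j hj
        have := Finset.mem_Icc.mp (hI hj)
        refine Finset.mem_Icc.mpr ⟨this.1, ?_⟩
        rcases Nat.lt_or_ge j (m + 1) with h | h
        · omega
        · exfalso; have : j = m + 1 := by omega
          exact hm (this ▸ hj)
      have := ih I hsub
      rw [setBits] at this
      rw [this]
      simp [hm]

lemma zip_map_fst_snd {α β : Type*} (l : List (α × β)) :
    (l.map Prod.fst).zip (l.map Prod.snd) = l := by
  induction l with
  | nil => rfl
  | cons a t ih => simp [ih]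

lemma get?_zip {α β : Type*} : ∀ (l : List α) (l' : List β) (k : ℕ),
    (l.zip l')[k]? = (l[k]?).bind (fun a => (l'[k]?).map (fun b => (a, b)))
  | [], _, _ => by simp
  | _ :: _, [], _ => by simp
  | a :: t, b :: t', 0 => by simp
  | a :: t, b :: t', k + 1 => by
      simpa using get?_zip t t' k

/-- Two-bit state counting occurrences (saturating at 2). -/
def stD (k : ℕ) : Bool × Bool := (decide (1 ≤ k), decide (2 ≤ k))

/-- Count step function. -/
def gB (d : Bool × Bool) (b : Bool) : Bool × Bool := if b then (true, d.1) else d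

lemma gB_stD (k : ℕ) (b : Bool) : gB (stD k) b = stD (if b then k + 1 else k) := by
  cases b
  · simp [gB]
  · simp only [gB, if_pos, stD]
    refine Prod.ext ?_ ?_ <;> simp <;> omega

lemma foldl_gB : ∀ (bs : List Bool) (k : ℕ), bs.foldl gB (stD k) = stD (k + bs.count true)
  | [], k => by simp
  | b :: t, k => by
      rw [List.foldl_cons, gB_stD, foldl_gB t]
      cases b
      · simp [List.count_cons]
      · simp only [List.count_cons, if_true]
        congr 1
        simp
        omega

lemma stD_eq_one (c : ℕ) : stD c = stD 1 ↔ c = 1 := by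
  constructor
  · intro h
    have h1 := congrArg Prod.fst h
    have h2 := congrArg Prod.snd h
    simp [stD] at h1 h2
    omega
  · rintro rfl; rfl

end Bits
section Emb

variable {A K : Type}

/-- Embedding of extended letters: the extra bit gives the value of the variables
outside `V'`. -/
def embW {V' F : Finset Var} (p : AV A V' × Bool) : AV A F :=
  (p.1.1, fun v => if hv : v.1 ∈ V' then p.1.2 ⟨v.1, hv⟩ else p.2)

lemma bitFO_emb {V' F : Finset Var} (hVF : V' ⊆ F) (w : List (AV A V' × Bool))
    (y j : ℕ) (hy : Sum.inl y ∈ V') :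
    bitFO F (w.map embW) y j ↔ bitFO V' (w.map Prod.fst) y j := by
  unfold bitFO
  rw [List.getElem?_map, List.getElem?_map]
  cases hwj : w[j - 1]? with
  | none => simp
  | some p =>
    simp only [Option.map_some, Option.mem_def, Option.some.injEq]
    constructor
    · rintro ⟨hF, q, rfl, h1, hbit⟩
      rw [show (embW (F := F) p).2 ⟨Sum.inl y, hF⟩ = p.1.2 ⟨Sum.inl y, hy⟩ from dif_pos hy]
        at hbit
      exact ⟨hy, p.1, rfl, h1, hbit⟩
    · rintro ⟨hV, q, rfl, h1, hbit⟩
      refine ⟨hVF hy, embW p, rfl, h1, ?_⟩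
      rw [show (embW (F := F) p).2 ⟨Sum.inl y, hVF hy⟩ = p.1.2 ⟨Sum.inl y, hy⟩ from dif_pos hy]
      exact hbit

lemma bitSO_emb {V' F : Finset Var} (hVF : V' ⊆ F) (w : List (AV A V' × Bool))
    (Y j : ℕ) (hY : Sum.inr Y ∈ V') :
    bitSO F (w.map embW) Y j ↔ bitSO V' (w.map Prod.fst) Y j := by
  unfold bitSO
  rw [List.getElem?_map, List.getElem?_map]
  cases hwj : w[j - 1]? with
  | none => simp
  | some p =>
    simp only [Option.map_some, Option.mem_def, Option.some.injEq]
    constructor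
    · rintro ⟨hF, q, rfl, h1, hbit⟩
      rw [show (embW (F := F) p).2 ⟨Sum.inr Y, hF⟩ = p.1.2 ⟨Sum.inr Y, hY⟩ from dif_pos hY]
        at hbit
      exact ⟨hY, p.1, rfl, h1, hbit⟩
    · rintro ⟨hV, q, rfl, h1, hbit⟩
      refine ⟨hVF hY, embW p, rfl, h1, ?_⟩
      rw [show (embW (F := F) p).2 ⟨Sum.inr Y, hVF hY⟩ = p.1.2 ⟨Sum.inr Y, hY⟩ from dif_pos hY]
      exact hbit

lemma bitFO_emb_missing {V' F : Finset Var} (w : List (AV A V' × Bool))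
    (x j : ℕ) (hx : Sum.inl x ∈ F) (hx' : Sum.inl x ∉ V') :
    bitFO F (w.map embW) x j ↔ (1 ≤ j ∧ (w.map Prod.snd)[j - 1]? = some true) := by
  unfold bitFO
  rw [List.getElem?_map, List.getElem?_map]
  cases hwj : w[j - 1]? with
  | none => simp
  | some p =>
    simp only [Option.map_some, Option.mem_def, Option.some.injEq]
    constructor
    · rintro ⟨hF, q, rfl, h1, hbit⟩
      rw [show (embW (F := F) p).2 ⟨Sum.inl x, hF⟩ = p.2 from dif_neg hx'] at hbit
      exact ⟨h1, by rw [hbit]⟩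
    · rintro ⟨h1, hbit⟩
      refine ⟨hx, embW p, rfl, h1, ?_⟩
      rw [show (embW (F := F) p).2 ⟨Sum.inl x, hx⟩ = p.2 from dif_neg hx']
      simpa using hbit

lemma bitSO_emb_missing {V' F : Finset Var} (w : List (AV A V' × Bool))
    (X j : ℕ) (hX : Sum.inr X ∈ F) (hX' : Sum.inr X ∉ V') :
    bitSO F (w.map embW) X j ↔ (1 ≤ j ∧ (w.map Prod.snd)[j - 1]? = some true) := by
  unfold bitSO
  rw [List.getElem?_map, List.getElem?_map]
  cases hwj : w[j - 1]? with
  | none => simp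
  | some p =>
    simp only [Option.map_some, Option.mem_def, Option.some.injEq]
    constructor
    · rintro ⟨hF, q, rfl, h1, hbit⟩
      rw [show (embW (F := F) p).2 ⟨Sum.inr X, hF⟩ = p.2 from dif_neg hX'] at hbit
      exact ⟨h1, by rw [hbit]⟩
    · rintro ⟨h1, hbit⟩
      refine ⟨hX, embW p, rfl, h1, ?_⟩
      rw [show (embW (F := F) p).2 ⟨Sum.inr X, hX⟩ = p.2 from dif_neg hX']
      simpa using hbit

lemma emb_word_fst {V' F : Finset Var} (w : List (AV A V' × Bool)) :
    ((w.map (embW (F := F))).map Prod.fst) = (w.map Prod.fst).map Prod.fst := by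
  rw [List.map_map, List.map_map]
  rfl

end Emb
section Terms

variable {A K : Type} [Semiring K]

open Classical in
lemma semV_term_FO (M : OPM A) (φ : WFormula A K) (x : ℕ)
    (u : List (AV A (φ.free \ {Sum.inl x}))) (i : ℕ) (hi : i ∈ Finset.Icc 1 u.length) :
    semV M φ φ.free ((u.zip (setBits u.length {i})).map embW) =
      if validEnc (φ.free \ {Sum.inl x}) u then
        sem M (u.map Prod.fst) (Function.update (decFO (φ.free \ {Sum.inl x}) u) x i)
          (decSO (φ.free \ {Sum.inl x}) u) φ
      else 0 := by
  classical
  have hVF : (φ.free \ {Sum.inl x}) ⊆ φ.free := Finset.sdiff_subset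
  obtain ⟨hi1, hi2⟩ := Finset.mem_Icc.mp hi
  have hfst : (u.zip (setBits u.length {i})).map Prod.fst = u :=
    List.map_fst_zip (by simp)
  have hsnd : (u.zip (setBits u.length {i})).map Prod.snd = setBits u.length {i} :=
    List.map_snd_zip (by simp)
  have hxnV : Sum.inl x ∉ (φ.free \ {Sum.inl x}) := by simp
  have hxbit : ∀ _ : Sum.inl x ∈ φ.free, ∀ j,
      bitFO φ.free ((u.zip (setBits u.length {i})).map embW) x j ↔ j = i := by
    intro hx j
    rw [bitFO_emb_missing _ x j hx hxnV, hsnd, setBits_get?]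
    constructor
    · rintro ⟨h1, h2⟩
      by_cases hlt : j - 1 < u.length
      · rw [if_pos hlt] at h2
        have h3 := Option.some.inj h2
        have h4 : j - 1 + 1 ∈ ({i} : Finset ℕ) := by simpa using h3
        simp only [Finset.mem_singleton] at h4
        omega
      · rw [if_neg hlt] at h2; exact absurd h2 (by simp)
    · intro hji
      refine ⟨by omega, ?_⟩
      rw [if_pos (by omega)]
      simp only [Option.some.injEq]
      rw [show j - 1 + 1 = j by omega]
      simp [hji]
  have hyV : ∀ y, Sum.inl y ∈ φ.free → y ≠ x → Sum.inl y ∈ (φ.free \ {Sum.inl x}) := by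
    intro y hy hne
    exact Finset.mem_sdiff.mpr ⟨hy, by simp [hne]⟩
  have hval : validEnc φ.free ((u.zip (setBits u.length {i})).map embW) ↔
      validEnc (φ.free \ {Sum.inl x}) u := by
    constructor
    · intro h y hy
      obtain ⟨j, hj, huniq⟩ := h y (hVF hy)
      have hj2 : bitFO (φ.free \ {Sum.inl x}) u y j := by
        rw [← hfst, ← bitFO_emb hVF _ y j hy]
        exact hj
      refine ⟨j, hj2, fun j' hj' => huniq j' ?_⟩
      show bitFO φ.free ((u.zip (setBits u.length {i})).map embW) y j'
      rw [bitFO_emb hVF _ y j' hy, hfst]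
      exact hj'
    · intro h y hyF
      by_cases hyx : y = x
      · subst hyx
        exact ⟨i, (hxbit hyF i).mpr rfl, fun j hj => (hxbit hyF j).mp hj⟩
      · obtain ⟨j, hj, huniq⟩ := h y (hyV y hyF hyx)
        have hj2 : bitFO (φ.free \ {Sum.inl x}) u y j := hj
        rw [← hfst, ← bitFO_emb hVF _ y j (hyV y hyF hyx)] at hj2
        refine ⟨j, hj2, fun j' hj' => huniq j' ?_⟩
        show bitFO (φ.free \ {Sum.inl x}) u y j'
        rw [← hfst, ← bitFO_emb hVF _ y j' (hyV y hyF hyx)]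
        exact hj'
  by_cases hv : validEnc (φ.free \ {Sum.inl x}) u
  · rw [semV, if_pos (hval.mpr hv), if_pos hv]
    rw [emb_word_fst, hfst]
    apply sem_congr
    · intro y hy
      by_cases hxy : y = x
      · subst hxy
        rw [Function.update_self]
        show sInf {j | bitFO φ.free ((u.zip (setBits u.length {i})).map embW) y j} = i
        have hset : {j | bitFO φ.free ((u.zip (setBits u.length {i})).map embW) y j} =
            {i} := Set.ext fun j => by rw [Set.mem_setOf_eq, hxbit hy j]; simp
        rw [hset]
        exact csInf_singleton i
      · rw [Function.update_of_ne hxy]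
        show sInf {j | bitFO φ.free ((u.zip (setBits u.length {i})).map embW) y j} =
          sInf {j | bitFO (φ.free \ {Sum.inl x}) u y j}
        congr 1
        ext j
        simp only [Set.mem_setOf_eq]
        rw [bitFO_emb hVF _ y j (hyV y hy hxy), hfst]
    · intro Y hY
      have hYV : Sum.inr Y ∈ (φ.free \ {Sum.inl x}) :=
        Finset.mem_sdiff.mpr ⟨hY, by simp⟩
      show {j | bitSO φ.free ((u.zip (setBits u.length {i})).map embW) Y j} =
        {j | bitSO (φ.free \ {Sum.inl x}) u Y j}
      ext j
      simp only [Set.mem_setOf_eq]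
      rw [bitSO_emb hVF _ Y j hYV, hfst]
  · rw [semV, if_neg (fun hh => hv (hval.mp hh)), if_neg hv]

open Classical in
lemma semV_term_SO (M : OPM A) (φ : WFormula A K) (X : ℕ)
    (u : List (AV A (φ.free \ {Sum.inr X}))) (I : Finset ℕ)
    (hI : I ∈ (Finset.Icc 1 u.length).powerset) :
    semV M φ φ.free ((u.zip (setBits u.length I)).map embW) =
      if validEnc (φ.free \ {Sum.inr X}) u then
        sem M (u.map Prod.fst) (decFO (φ.free \ {Sum.inr X}) u)
          (Function.update (decSO (φ.free \ {Sum.inr X}) u) X (↑I : Set ℕ)) φ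
      else 0 := by
  classical
  have hVF : (φ.free \ {Sum.inr X}) ⊆ φ.free := Finset.sdiff_subset
  have hIs := Finset.mem_powerset.mp hI
  have hfst : (u.zip (setBits u.length I)).map Prod.fst = u :=
    List.map_fst_zip (by simp)
  have hsnd : (u.zip (setBits u.length I)).map Prod.snd = setBits u.length I :=
    List.map_snd_zip (by simp)
  have hXnV : Sum.inr X ∉ (φ.free \ {Sum.inr X}) := by simp
  have hyV : ∀ y, Sum.inl y ∈ φ.free → Sum.inl y ∈ (φ.free \ {Sum.inr X}) := by
    intro y hy
    exact Finset.mem_sdiff.mpr ⟨hy, by simp⟩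
  have hXbit : ∀ _ : Sum.inr X ∈ φ.free, ∀ j,
      bitSO φ.free ((u.zip (setBits u.length I)).map embW) X j ↔ j ∈ I := by
    intro hX j
    rw [bitSO_emb_missing _ X j hX hXnV, hsnd, setBits_get?]
    constructor
    · rintro ⟨h1, h2⟩
      by_cases hlt : j - 1 < u.length
      · rw [if_pos hlt] at h2
        have h3 := Option.some.inj h2
        have h4 : j - 1 + 1 ∈ I := by simpa using h3
        rwa [show j - 1 + 1 = j by omega] at h4
      · rw [if_neg hlt] at h2; exact absurd h2 (by simp)
    · intro hj
      have hjIcc := Finset.mem_Icc.mp (hIs hj)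
      refine ⟨hjIcc.1, ?_⟩
      rw [if_pos (by omega)]
      simp only [Option.some.injEq]
      rw [show j - 1 + 1 = j by omega]
      simp [hj]
  have hval : validEnc φ.free ((u.zip (setBits u.length I)).map embW) ↔
      validEnc (φ.free \ {Sum.inr X}) u := by
    constructor
    · intro h y hy
      obtain ⟨j, hj, huniq⟩ := h y (hVF hy)
      have hj2 : bitFO φ.free ((u.zip (setBits u.length I)).map embW) y j := hj
      rw [bitFO_emb hVF _ y j hy, hfst] at hj2
      refine ⟨j, hj2, fun j' hj' => huniq j' ?_⟩
      show bitFO φ.free ((u.zip (setBits u.length I)).map embW) y j'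
      rw [bitFO_emb hVF _ y j' hy, hfst]
      exact hj'
    · intro h y hyF
      obtain ⟨j, hj, huniq⟩ := h y (hyV y hyF)
      have hj2 : bitFO (φ.free \ {Sum.inr X}) u y j := hj
      rw [← hfst, ← bitFO_emb hVF _ y j (hyV y hyF)] at hj2
      refine ⟨j, hj2, fun j' hj' => huniq j' ?_⟩
      show bitFO (φ.free \ {Sum.inr X}) u y j'
      rw [← hfst, ← bitFO_emb hVF _ y j' (hyV y hyF)]
      exact hj'
  by_cases hv : validEnc (φ.free \ {Sum.inr X}) u
  · rw [semV, if_pos (hval.mpr hv), if_pos hv]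
    rw [emb_word_fst, hfst]
    apply sem_congr
    · intro y hy
      show sInf {j | bitFO φ.free ((u.zip (setBits u.length I)).map embW) y j} =
        sInf {j | bitFO (φ.free \ {Sum.inr X}) u y j}
      congr 1
      ext j
      simp only [Set.mem_setOf_eq]
      rw [bitFO_emb hVF _ y j (hyV y hy), hfst]
    · intro Y hY
      by_cases hXY : Y = X
      · subst hXY
        rw [Function.update_self]
        show {j | bitSO φ.free ((u.zip (setBits u.length I)).map embW) Y j} = (↑I : Set ℕ)
        ext j
        simp only [Set.mem_setOf_eq, Finset.mem_coe]
        rw [hXbit hY j]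
      · rw [Function.update_of_ne hXY]
        have hYV : Sum.inr Y ∈ (φ.free \ {Sum.inr X}) :=
          Finset.mem_sdiff.mpr ⟨hY, by simp [hXY]⟩
        show {j | bitSO φ.free ((u.zip (setBits u.length I)).map embW) Y j} =
          {j | bitSO (φ.free \ {Sum.inr X}) u Y j}
        ext j
        simp only [Set.mem_setOf_eq]
        rw [bitSO_emb hVF _ Y j hYV, hfst]
  · rw [semV, if_neg (fun hh => hv (hval.mp hh)), if_neg hv]

lemma semV_sumFO (M : OPM A) (φ : WFormula A K) (x : ℕ)
    (u : List (AV A (φ.free \ {Sum.inl x}))) :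
    semV M (.sumFO x φ) (φ.free \ {Sum.inl x}) u =
      ∑ i ∈ Finset.Icc 1 u.length,
        semV M φ φ.free ((u.zip (setBits u.length {i})).map embW) := by
  classical
  by_cases hv : validEnc (φ.free \ {Sum.inl x}) u
  · rw [semV, if_pos hv]
    show (∑ i ∈ Finset.Icc 1 (u.map Prod.fst).length, _) = _
    rw [List.length_map]
    refine Finset.sum_congr rfl fun i hi => ?_
    rw [semV_term_FO M φ x u i hi, if_pos hv]
  · rw [semV, if_neg hv]
    symm
    refine Finset.sum_eq_zero fun i hi => ?_
    rw [semV_term_FO M φ x u i hi, if_neg hv]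

lemma semV_sumSO (M : OPM A) (φ : WFormula A K) (X : ℕ)
    (u : List (AV A (φ.free \ {Sum.inr X}))) :
    semV M (.sumSO X φ) (φ.free \ {Sum.inr X}) u =
      ∑ I ∈ (Finset.Icc 1 u.length).powerset,
        semV M φ φ.free ((u.zip (setBits u.length I)).map embW) := by
  classical
  by_cases hv : validEnc (φ.free \ {Sum.inr X}) u
  · rw [semV, if_pos hv]
    show (∑ I ∈ (Finset.Icc 1 (u.map Prod.fst).length).powerset, _) = _
    rw [List.length_map]
    refine Finset.sum_congr rfl fun I hI => ?_
    rw [semV_term_SO M φ X u I hI, if_pos hv]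
  · rw [semV, if_neg hv]
    symm
    refine Finset.sum_eq_zero fun I hI => ?_
    rw [semV_term_SO M φ X u I hI, if_neg hv]

end Terms
section Sets

lemma S_FO_eq {C : Type} (u : List C) :
    {w : List (C × Bool) | w.map Prod.fst = u ∧
        w.foldl (fun d cb => gB d cb.2) (stD 0) ∈ ({stD 1} : Set (Bool × Bool))} =
      (fun i => u.zip (setBits u.length {i})) '' ↑(Finset.Icc 1 u.length) := by
  ext w
  simp only [Set.mem_setOf_eq, Set.mem_image, Finset.coe_Icc, Set.mem_Icc]
  constructor
  · rintro ⟨hfst, hflag⟩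
    have hlen : w.length = u.length := by rw [← hfst, List.length_map]
    have hbs : (w.map Prod.snd).foldl gB (stD 0) = stD 1 := by
      rw [List.foldl_map]
      exact hflag
    rw [foldl_gB] at hbs
    have hcount : (w.map Prod.snd).count true = 1 := by
      have := (stD_eq_one _).mp hbs
      omega
    have hbits := setBits_bitIdx (w.map Prod.snd)
    have hcard : (bitIdx (w.map Prod.snd)).card = 1 := by
      rw [← hcount]
      conv_lhs => rw [← count_setBits _ _ (bitIdx_subset (w.map Prod.snd))]
      rw [hbits]
    obtain ⟨i, hIeq⟩ := Finset.card_eq_one.mp hcard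
    have hiIcc : i ∈ Finset.Icc 1 (w.map Prod.snd).length := by
      apply bitIdx_subset
      rw [hIeq]
      exact Finset.mem_singleton_self i
    rw [List.length_map, hlen] at hiIcc
    refine ⟨i, Finset.mem_Icc.mp hiIcc, ?_⟩
    have hsnd : setBits u.length {i} = w.map Prod.snd := by
      rw [← hIeq, ← show (List.map Prod.snd w).length = u.length by
        rw [List.length_map, hlen]]
      exact hbits
    show u.zip (setBits u.length {i}) = w
    rw [hsnd, ← hfst, zip_map_fst_snd]
  · rintro ⟨i, hi, rfl⟩
    have hfst : (u.zip (setBits u.length {i})).map Prod.fst = u :=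
      List.map_fst_zip (by simp)
    have hsnd : (u.zip (setBits u.length {i})).map Prod.snd = setBits u.length {i} :=
      List.map_snd_zip (by simp)
    refine ⟨hfst, ?_⟩
    have : ((u.zip (setBits u.length {i})).map Prod.snd).foldl gB (stD 0) = stD 1 := by
      rw [hsnd, foldl_gB, count_setBits _ _ (by simpa using Finset.mem_Icc.mpr hi)]
      simp
    rw [List.foldl_map] at this
    exact this

lemma S_FO_inj {C : Type} (u : List C) :
    Set.InjOn (fun i => u.zip (setBits u.length {i})) ↑(Finset.Icc 1 u.length) := by
  intro i hi i' hi' heq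
  simp only [Finset.coe_Icc, Set.mem_Icc] at hi hi'
  have h1 : (u.zip (setBits u.length {i})).map Prod.snd = setBits u.length {i} :=
    List.map_snd_zip (by simp)
  have h2 : (u.zip (setBits u.length {i'})).map Prod.snd = setBits u.length {i'} :=
    List.map_snd_zip (by simp)
  have heq' : u.zip (setBits u.length {i}) = u.zip (setBits u.length {i'}) := heq
  have : setBits u.length {i} = setBits u.length {i'} := by
    rw [← h1, ← h2, heq']
  have hbi := congrArg bitIdx this
  rw [bitIdx_setBits _ _ (by simpa using Finset.mem_Icc.mpr hi),
    bitIdx_setBits _ _ (by simpa using Finset.mem_Icc.mpr hi')] at hbi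
  simpa using hbi

lemma S_SO_eq {C : Type} (u : List C) :
    {w : List (C × Bool) | w.map Prod.fst = u ∧
        w.foldl (fun d _ => d) () ∈ (Set.univ : Set Unit)} =
      (fun I => u.zip (setBits u.length I)) '' ↑((Finset.Icc 1 u.length).powerset) := by
  ext w
  simp only [Set.mem_setOf_eq, Set.mem_image, Set.mem_univ, and_true, Finset.coe_powerset,
    Set.mem_preimage, Set.mem_powerset_iff, Finset.coe_Icc]
  constructor
  · intro hfst
    have hlen : w.length = u.length := by rw [← hfst, List.length_map]
    refine ⟨bitIdx (w.map Prod.snd), ?_, ?_⟩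
    · intro j hj
      have := bitIdx_subset _ hj
      rw [List.length_map, hlen] at this
      simpa using Finset.mem_Icc.mp this
    · have hsnd : setBits u.length (bitIdx (w.map Prod.snd)) = w.map Prod.snd := by
        rw [← show (List.map Prod.snd w).length = u.length by rw [List.length_map, hlen]]
        exact setBits_bitIdx (w.map Prod.snd)
      show u.zip (setBits u.length (bitIdx (w.map Prod.snd))) = w
      rw [hsnd, ← hfst, zip_map_fst_snd]
  · rintro ⟨I, hI, rfl⟩
    exact List.map_fst_zip (by simp)

lemma S_SO_inj {C : Type} (u : List C) :
    Set.InjOn (fun I => u.zip (setBits u.length I)) ↑((Finset.Icc 1 u.length).powerset) := by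
  intro I hI I' hI' heq
  simp only [Finset.coe_powerset, Set.mem_preimage, Set.mem_powerset_iff, Finset.coe_Icc]
    at hI hI'
  have h1 : (u.zip (setBits u.length I)).map Prod.snd = setBits u.length I :=
    List.map_snd_zip (by simp)
  have h2 : (u.zip (setBits u.length I')).map Prod.snd = setBits u.length I' :=
    List.map_snd_zip (by simp)
  have heq' : u.zip (setBits u.length I) = u.zip (setBits u.length I') := heq
  have hs : setBits u.length I = setBits u.length I' := by
    rw [← h1, ← h2, heq']
  have hbi := congrArg bitIdx hs
  rwa [bitIdx_setBits _ _ (fun j hj => by simpa using hI hj),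
    bitIdx_setBits _ _ (fun j hj => by simpa using hI' hj)] at hbi

end Sets

section Glue

variable {A K : Type} [Semiring K]

lemma opwords_emb {V' F : Finset Var} (M : OPM A) (w : List (AV A V' × Bool))
    (u : List (AV A V')) (hfst : w.map Prod.fst = u) (hu : u ∈ OPWords (extOPM M V')) :
    (w.map (embW (F := F))) ∈ OPWords (extOPM M F) := by
  obtain ⟨hne, hch⟩ := hu
  have hlen : w.length = u.length := by rw [← hfst, List.length_map]
  have hwne : w ≠ [] := by
    intro h
    apply hne
    rw [← hfst, h]
    rfl
  refine ⟨by simpa using hwne, ?_⟩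
  have hrel : ∀ i j, (extOPM M V').rel (letterAt u i) (letterAt u j) =
      (extOPM M F).rel (letterAt (w.map embW) i) (letterAt (w.map embW) j) := by
    intro i j
    rw [← hfst]
    simp only [letterAt_map]
    cases letterAt w i <;> cases letterAt w j <;> rfl
  have hc := chain_congr hrel hch
  rwa [show (w.map (embW (F := F))).length = u.length by rw [List.length_map, hlen]]

lemma hM_pull {V' F : Finset Var} (M : OPM A) :
    ∀ o o' : Option (AV A V' × Bool),
      (pullOPM (extOPM M F) (embW (A := A))).rel o o' =
        (extOPM M V').rel (o.map Prod.fst) (o'.map Prod.fst) := by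
  intro o o'
  cases o <;> cases o' <;> rfl

lemma keyFO [Fintype A] (M : OPM A) (φ : WFormula A K) (x : ℕ)
    (W : WOPA (AV A φ.free) K)
    (hW : ∀ w ∈ OPWords (extOPM M φ.free),
      semV M φ φ.free w = behavior (extOPM M φ.free) W w) :
    ∃ W' : WOPA (AV A (φ.free \ {Sum.inl x})) K,
      (Restricted W → Restricted W') ∧
      ∀ u ∈ OPWords (extOPM M (φ.free \ {Sum.inl x})),
        semV M (.sumFO x φ) (φ.free \ {Sum.inl x}) u =
          behavior (extOPM M (φ.free \ {Sum.inl x})) W' u := by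
  classical
  refine ⟨masterW Prod.fst (pullW (embW (F := φ.free)) W) (stD 0)
      (fun d cb => gB d cb.2) {stD 1}, ?_, ?_⟩
  · intro hr
    exact masterW_restricted _ _ _ _ _ (pullW_restricted _ _ hr)
  · intro u hu
    rw [behavior_master (pullOPM (extOPM M φ.free) (embW (F := φ.free)))
        (extOPM M (φ.free \ {Sum.inl x})) Prod.fst (pullW (embW (F := φ.free)) W) (stD 0)
        (fun d cb => gB d cb.2) {stD 1} (hM_pull M) u]
    rw [S_FO_eq u, finsum_mem_image (S_FO_inj u), finsum_mem_coe_finset]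
    rw [semV_sumFO M φ x u]
    refine Finset.sum_congr rfl fun i hi => ?_
    rw [pull_behavior (extOPM M φ.free) (embW (F := φ.free)) W (u.zip (setBits u.length {i}))]
    exact hW _ (opwords_emb M _ u (List.map_fst_zip (by simp)) hu)

lemma keySO [Fintype A] (M : OPM A) (φ : WFormula A K) (X : ℕ)
    (W : WOPA (AV A φ.free) K)
    (hW : ∀ w ∈ OPWords (extOPM M φ.free),
      semV M φ φ.free w = behavior (extOPM M φ.free) W w) :
    ∃ W' : WOPA (AV A (φ.free \ {Sum.inr X})) K,
      (Restricted W → Restricted W') ∧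
      ∀ u ∈ OPWords (extOPM M (φ.free \ {Sum.inr X})),
        semV M (.sumSO X φ) (φ.free \ {Sum.inr X}) u =
          behavior (extOPM M (φ.free \ {Sum.inr X})) W' u := by
  classical
  refine ⟨masterW Prod.fst (pullW (embW (F := φ.free)) W) ()
      (fun d _ => d) Set.univ, ?_, ?_⟩
  · intro hr
    exact masterW_restricted _ _ _ _ _ (pullW_restricted _ _ hr)
  · intro u hu
    rw [behavior_master (pullOPM (extOPM M φ.free) (embW (F := φ.free)))
        (extOPM M (φ.free \ {Sum.inr X})) Prod.fst (pullW (embW (F := φ.free)) W) ()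
        (fun d _ => d) Set.univ (hM_pull M) u]
    rw [S_SO_eq u, finsum_mem_image (S_SO_inj u), finsum_mem_coe_finset]
    rw [semV_sumSO M φ X u]
    refine Finset.sum_congr rfl fun I hI => ?_
    rw [pull_behavior (extOPM M φ.free) (embW (F := φ.free)) W (u.zip (setBits u.length I))]
    exact hW _ (opwords_emb M _ u (List.map_fst_zip (by simp)) hu)

end Glue
/-- Closure under the sum quantifiers `⊕ₓ` and `⊕_X`. -/
theorem closure_sumQuant {A K : Type} [Fintype A] [Semiring K] (M : OPM A)
    (φ : WFormula A K) (x X : ℕ) :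
    (Regular (extOPM M φ.free) (semV M φ φ.free) →
      Regular (extOPM M (WFormula.sumFO x φ).free)
        (semV M (.sumFO x φ) (WFormula.sumFO x φ).free) ∧
      Regular (extOPM M (WFormula.sumSO X φ).free)
        (semV M (.sumSO X φ) (WFormula.sumSO X φ).free)) ∧
    (StrictlyRegular (extOPM M φ.free) (semV M φ φ.free) →
      StrictlyRegular (extOPM M (WFormula.sumFO x φ).free)
        (semV M (.sumFO x φ) (WFormula.sumFO x φ).free) ∧
      StrictlyRegular (extOPM M (WFormula.sumSO X φ).free)
        (semV M (.sumSO X φ) (WFormula.sumSO X φ).free)) := by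
  constructor
  · rintro ⟨W, hW⟩
    constructor
    · obtain ⟨W', -, hb⟩ := keyFO M φ x W hW
      exact ⟨W', hb⟩
    · obtain ⟨W', -, hb⟩ := keySO M φ X W hW
      exact ⟨W', hb⟩
  · rintro ⟨W, hres, hW⟩
    constructor
    · obtain ⟨W', hres', hb⟩ := keyFO M φ x W hW
      exact ⟨W', hres' hres, hb⟩
    · obtain ⟨W', hres', hb⟩ := keySO M φ X W hW
      exact ⟨W', hres' hres, hb⟩
end WOP
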